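/- arXiv:1011.1363 — 5 statements merged into one kernel-verified Lean document; each statement's English description precedes it below -/
import Mathlib

section
/- (Brauer's theorem) Let T be an n×n complex matrix with eigenpair (λ, v), i.e., T v = λ v with v ≠ 0. Let u ∈ ℂⁿ satisfy u* v = 1 and let s ∈ ℂ. Then the characteristic polynomial of T + s v u* equals the characteristic polynomial of T multiplied by (x − λ − s)/(x − λ); equivalently, the multiset of eigenvalues of T + s v u* is obtained from that of T by replacing one occurrence of λ with λ + s. -/
open Polynomial Matrix

set_option synthInstance.maxHeartbeats 1000000 in
set_option maxHeartbeats 2000000 in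
/-- **Brauer's theorem.** If `(λ, v)` is an eigenpair of `T` and `u* v = 1`, then the
eigenvalues of `T + s v u*` are those of `T` with one occurrence of `λ` replaced by
`λ + s`; equivalently, the characteristic polynomials satisfy
`charpoly(T + s v u*) * (x - λ) = charpoly(T) * (x - (λ + s))`. -/
theorem brauer_rank_one_shift {n : ℕ} (T : Matrix (Fin n) (Fin n) ℂ)
    (v u : Fin n → ℂ) (lam s : ℂ)
    (hv : v ≠ 0) (heig : T.mulVec v = lam • v)
    (huv : dotProduct (star u) v = 1) :
    (T + s • Matrix.vecMulVec v (star u)).charpoly * (X - C lam) =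
      T.charpoly * (X - C (lam + s)) := by
  classical
  let f : ℂ[X] →+* RatFunc ℂ := algebraMap ℂ[X] (RatFunc ℂ)
  have hf : Function.Injective f := IsFractionRing.injective ℂ[X] (RatFunc ℂ)
  apply hf
  let g : ℂ →+* RatFunc ℂ := f.comp Polynomial.C
  let A : Matrix (Fin n) (Fin n) (RatFunc ℂ) := (charmatrix T).map f
  let v' : Fin n → RatFunc ℂ := fun i => g (v i)
  let u' : Fin n → RatFunc ℂ := fun j => g (star u j)
  let d : RatFunc ℂ := f X - g lam
  -- eigen relation for the charmatrix over ℂ[X]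
  have hA0 : (charmatrix T).mulVec (fun i => Polynomial.C (v i)) =
      (X - Polynomial.C lam) • (fun i => Polynomial.C (v i)) := by
    funext i
    have h := congrFun heig i
    simp only [Matrix.mulVec, dotProduct, Pi.smul_apply, smul_eq_mul] at h
    simp only [Matrix.mulVec, dotProduct, charmatrix_apply, Matrix.diagonal, Pi.smul_apply,
      smul_eq_mul, Matrix.of_apply, sub_mul, ite_mul, zero_mul, Finset.sum_sub_distrib,
      Finset.sum_ite_eq, Finset.mem_univ, if_true, ← _root_.map_mul, ← map_sum, h]
  -- eigen relation over RatFunc ℂ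
  have hA : A.mulVec v' = d • v' := by
    funext i
    have := congrArg f (congrFun hA0 i)
    rw [RingHom.map_mulVec] at this
    simpa [A, v', d, g, Function.comp_def, sub_mul, mul_comm] using this
  have hdetA : A.det = f T.charpoly := by
    rw [Matrix.charpoly, RingHom.map_det]; rfl
  have hdet : IsUnit A.det := by
    rw [hdetA, isUnit_iff_ne_zero]
    intro h0
    exact (Matrix.charpoly_monic T).ne_zero (by simpa [map_eq_zero_iff f hf] using h0)
  have hd : d ≠ 0 := by
    have hde : d = f (X - Polynomial.C lam) := by simp [d, g]
    rw [hde, Ne, map_eq_zero_iff f hf]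
    exact Polynomial.X_sub_C_ne_zero lam
  -- inverse eigen relation
  have hAinv : A⁻¹ *ᵥ v' = d⁻¹ • v' := by
    have h1 : A⁻¹ *ᵥ (A *ᵥ v') = v' := by
      rw [Matrix.mulVec_mulVec, Matrix.nonsing_inv_mul A hdet, Matrix.one_mulVec]
    rw [hA, Matrix.mulVec_smul] at h1
    calc A⁻¹ *ᵥ v' = d⁻¹ • (d • (A⁻¹ *ᵥ v')) := by
          rw [smul_smul, inv_mul_cancel₀ hd, one_smul]
      _ = d⁻¹ • v' := by rw [h1]
  -- rewrite the modified charmatrix as rank-one update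
  let w : Fin n → RatFunc ℂ := fun i => (-(g s)) * v' i
  have hB0 : charmatrix (T + s • Matrix.vecMulVec v (star u)) =
      charmatrix T - Matrix.of (fun p q => Polynomial.C (s * v p * star u q)) := by
    ext i j
    simp only [charmatrix_apply, Matrix.add_apply, Matrix.smul_apply, Matrix.vecMulVec_apply,
      smul_eq_mul, map_add, _root_.map_mul, Matrix.sub_apply, Matrix.of_apply]
    ring
  have hB : (charmatrix (T + s • Matrix.vecMulVec v (star u))).map f =
      A + Matrix.replicateCol Unit w * Matrix.replicateRow Unit u' := by
    ext i j
    simp only [hB0, A, w, u', v', g, Matrix.map_apply, Matrix.sub_apply, Matrix.add_apply,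
      Matrix.mul_apply, Matrix.replicateCol_apply, Matrix.replicateRow_apply, Finset.univ_unique,
      Finset.sum_singleton, Matrix.of_apply, map_sub, _root_.map_mul,
      RingHom.coe_comp, Function.comp_apply]
    ring
  have hdot : u' ⬝ᵥ v' = 1 := by
    have := congrArg g huv
    simpa [u', v', dotProduct, map_sum, _root_.map_mul] using this
  have key : ((charmatrix (T + s • Matrix.vecMulVec v (star u))).map f).det =
      A.det * (1 + (-(g s)) * d⁻¹) := by
    rw [hB, Matrix.det_add_replicateCol_mul_replicateRow (ι := Unit) hdet,
      Matrix.det_unique (1 + Matrix.replicateRow Unit u' * A⁻¹ * Matrix.replicateCol Unit w)]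
    congr 1
    rw [← Matrix.replicateRow_vecMul]
    simp only [Matrix.add_apply, Matrix.one_apply_eq, Matrix.replicateRow_mul_replicateCol_apply]
    rw [← dotProduct_mulVec]
    have hw : A⁻¹ *ᵥ w = ((-(g s)) * d⁻¹) • v' := by
      have : w = (-(g s)) • v' := rfl
      rw [this, Matrix.mulVec_smul, hAinv, smul_smul, mul_comm]
    rw [hw, dotProduct_smul, hdot, smul_eq_mul, mul_one]
  have hL : f ((T + s • Matrix.vecMulVec v (star u)).charpoly) =
      A.det * (1 + (-(g s)) * d⁻¹) := by
    rw [Matrix.charpoly, RingHom.map_det, ← key]; rfl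
  rw [_root_.map_mul, _root_.map_mul, hL]
  have hR : f (X - Polynomial.C lam) = d := by rw [map_sub]; rfl
  have hR2 : f (X - Polynomial.C (lam + s)) = d - g s := by
    rw [Polynomial.C_add, map_sub, map_add]
    show f X - (f (Polynomial.C lam) + f (Polynomial.C s)) =
      (f X - f (Polynomial.C lam)) - f (Polynomial.C s)
    ring
  rw [hR, hR2, ← hdetA]
  have : (1 + (-(g s)) * d⁻¹) * d = d - g s := by
    field_simp
    ring
  rw [mul_assoc, this]
end

section
/- For square matrices M, N and invertible T₁, T₂ of the matching sizes, sep(M,N) ≤ sep(T₁ M T₁⁻¹, T₂ N T₂⁻¹) · κ(T₁) · κ(T₂), where κ(T) = ‖T‖·‖T⁻¹‖ is the condition number. -/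
attribute [local instance] Matrix.frobeniusNormedAddCommGroup

/-- The separation of `M` and `N` in the Frobenius norm. -/
noncomputable def sepF {k l : Type*} [Fintype k] [Fintype l]
    (M : Matrix k k ℂ) (N : Matrix l l ℂ) : ℝ :=
  sInf ((fun X : Matrix k l ℂ => ‖M * X - X * N‖ / ‖X‖) '' {X | X ≠ 0})

lemma sepF_of_subsingleton {k l : Type*} [Fintype k] [Fintype l]
    [Subsingleton (Matrix k l ℂ)]
    (M : Matrix k k ℂ) (N : Matrix l l ℂ) : sepF M N = 0 := by
  have : {X : Matrix k l ℂ | X ≠ 0} = ∅ := by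
    ext X; simp [Subsingleton.elim X 0]
  simp [sepF, this]

set_option maxHeartbeats 1000000 in
/-- `sep(M,N) ≤ sep(T₁ M T₁⁻¹, T₂ N T₂⁻¹) κ(T₁) κ(T₂)` where `κ(T) = ‖T‖ ‖T⁻¹‖`. -/
theorem sepF_similarity {p q : ℕ}
    (M T₁ : Matrix (Fin p) (Fin p) ℂ) (N T₂ : Matrix (Fin q) (Fin q) ℂ)
    (hT₁ : IsUnit T₁.det) (hT₂ : IsUnit T₂.det) :
    sepF M N ≤ sepF (T₁ * M * T₁⁻¹) (T₂ * N * T₂⁻¹) *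
      (‖T₁‖ * ‖T₁⁻¹‖) * (‖T₂‖ * ‖T₂⁻¹‖) := by
  rcases Nat.eq_zero_or_pos p with hp | hp
  · subst hp
    rw [sepF_of_subsingleton, sepF_of_subsingleton]; simp
  rcases Nat.eq_zero_or_pos q with hq | hq
  · subst hq
    rw [sepF_of_subsingleton, sepF_of_subsingleton]; simp
  have hnp : Nonempty (Fin p) := Fin.pos_iff_nonempty.mp hp
  have hnq : Nonempty (Fin q) := Fin.pos_iff_nonempty.mp hq
  have hT₁0 : (0:ℝ) < ‖T₁‖ := by
    rw [norm_pos_iff]; rintro rfl; simp [Matrix.det_zero] at hT₁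
  have hT₂0 : (0:ℝ) < ‖T₂‖ := by
    rw [norm_pos_iff]; rintro rfl; simp [Matrix.det_zero] at hT₂
  have hT₁i0 : (0:ℝ) < ‖T₁⁻¹‖ := by
    rw [norm_pos_iff]
    have h1 := T₁.isUnit_nonsing_inv_det hT₁
    rintro h; rw [h] at h1; simp [Matrix.det_zero] at h1
  have hT₂i0 : (0:ℝ) < ‖T₂⁻¹‖ := by
    rw [norm_pos_iff]
    have h1 := T₂.isUnit_nonsing_inv_det hT₂
    rintro h; rw [h] at h1; simp [Matrix.det_zero] at h1
  set κ : ℝ := (‖T₁‖ * ‖T₁⁻¹‖) * (‖T₂‖ * ‖T₂⁻¹‖) with hκdef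
  have hκ : (0:ℝ) < κ := by positivity
  set S' := ((fun Y : Matrix (Fin p) (Fin q) ℂ =>
      ‖(T₁ * M * T₁⁻¹) * Y - Y * (T₂ * N * T₂⁻¹)‖ / ‖Y‖) '' {Y | Y ≠ 0}) with hS'
  have hS'ne : S'.Nonempty := by
    refine ⟨_, ⟨(Matrix.of fun _ _ => (1:ℂ)), ?_, rfl⟩⟩
    intro h
    have := congrFun (congrFun h ⟨0, hp⟩) ⟨0, hq⟩
    simp at this
  have hSbdd : BddBelow ((fun X : Matrix (Fin p) (Fin q) ℂ =>
      ‖M * X - X * N‖ / ‖X‖) '' {X | X ≠ 0}) := by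
    refine ⟨0, ?_⟩
    rintro r ⟨X, -, rfl⟩
    positivity
  have key : sepF M N / κ ≤ sInf S' := by
    apply le_csInf hS'ne
    rintro b ⟨Y, hY, rfl⟩
    have hYn : (0:ℝ) < ‖Y‖ := by rwa [norm_pos_iff]
    set X : Matrix (Fin p) (Fin q) ℂ := T₁⁻¹ * Y * T₂ with hXdef
    have hYX : T₁ * X * T₂⁻¹ = Y := by
      rw [hXdef, ← Matrix.mul_assoc, Matrix.mul_nonsing_inv_cancel_left _ _ hT₁,
        Matrix.mul_nonsing_inv_cancel_right _ _ hT₂]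
    have hX0 : X ≠ 0 := by
      intro h; rw [h, Matrix.mul_zero, Matrix.zero_mul] at hYX; exact hY hYX.symm
    have hXn : (0:ℝ) < ‖X‖ := by rwa [norm_pos_iff]
    have hid : M * X - X * N = T₁⁻¹ * ((T₁ * M * T₁⁻¹) * Y - Y * (T₂ * N * T₂⁻¹)) * T₂ := by
      rw [hXdef]
      simp only [Matrix.mul_sub, Matrix.sub_mul, Matrix.mul_assoc,
        Matrix.nonsing_inv_mul T₂ hT₂, Matrix.mul_one,
        Matrix.nonsing_inv_mul_cancel_left _ _ hT₁]
    set D' := (T₁ * M * T₁⁻¹) * Y - Y * (T₂ * N * T₂⁻¹) with hD'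
    have hDb : ‖M * X - X * N‖ ≤ ‖T₁⁻¹‖ * ‖D'‖ * ‖T₂‖ := by
      rw [hid]
      calc ‖T₁⁻¹ * D' * T₂‖ ≤ ‖T₁⁻¹ * D'‖ * ‖T₂‖ := Matrix.frobenius_norm_mul _ _
        _ ≤ ‖T₁⁻¹‖ * ‖D'‖ * ‖T₂‖ := by
            gcongr; exact Matrix.frobenius_norm_mul _ _
    have hYb : ‖Y‖ ≤ ‖T₁‖ * ‖X‖ * ‖T₂⁻¹‖ := by
      conv_lhs => rw [← hYX]
      calc ‖T₁ * X * T₂⁻¹‖ ≤ ‖T₁ * X‖ * ‖T₂⁻¹‖ := Matrix.frobenius_norm_mul _ _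
        _ ≤ ‖T₁‖ * ‖X‖ * ‖T₂⁻¹‖ := by
            gcongr; exact Matrix.frobenius_norm_mul _ _
    have h1 : sepF M N ≤ ‖M * X - X * N‖ / ‖X‖ := by
      apply csInf_le hSbdd
      exact ⟨X, hX0, rfl⟩
    rw [div_le_iff₀ hκ]
    refine h1.trans ?_
    rw [div_le_iff₀ hXn, div_mul_eq_mul_div, div_mul_eq_mul_div, le_div_iff₀ hYn]
    have hD'n : (0:ℝ) ≤ ‖D'‖ := norm_nonneg _
    calc ‖M * X - X * N‖ * ‖Y‖ ≤ (‖T₁⁻¹‖ * ‖D'‖ * ‖T₂‖) * (‖T₁‖ * ‖X‖ * ‖T₂⁻¹‖) := by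
          apply mul_le_mul hDb hYb (norm_nonneg _) (by positivity)
      _ = ‖D'‖ * κ * ‖X‖ := by rw [hκdef]; ring
  have final : sepF M N ≤ sInf S' * κ := (div_le_iff₀ hκ).mp key
  refine final.trans_eq ?_
  simp only [sepF, hκdef, ← hS']
  ring
end

section
/- Let W = span of the columns of [I; X] and W̃ = span of the columns of [I; X̃], where X, X̃ ∈ ℂ^{m×n}. Then ‖X − X̃‖ ≤ (‖Iₙ‖² + ‖X‖²)^{1/2} (‖Iₙ‖² + ‖X̃‖²)^{1/2} · dist(W, W̃), where dist(U,V) = ‖P_U − P_V‖ is the distance between subspaces measured via orthogonal projections, for both the spectral and Frobenius norms. -/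
open Matrix
/-- The Frobenius norm of a matrix. -/
noncomputable def frobNorm {a b : Type*} [Fintype a] [Fintype b]
    (A : Matrix a b ℂ) : ℝ :=
  @norm _ (Matrix.frobeniusNormedAddCommGroup).toNorm A

/-- The spectral norm (ℓ²-operator norm) of a matrix. -/
noncomputable def specNorm {a b : Type*} [Fintype a] [Fintype b] [DecidableEq b]
    (A : Matrix a b ℂ) : ℝ :=
  @norm _ (Matrix.instL2OpNormedAddCommGroup).toNorm A

set_option linter.unusedSectionVars false

namespace DP

section Spec
open scoped Matrix.Norms.L2Operator
variable {l m n : Type*} [Fintype l] [Fintype m] [Fintype n]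
  [DecidableEq l] [DecidableEq m] [DecidableEq n]

lemma spec_eq (A : Matrix m n ℂ) : specNorm A = ‖A‖ := rfl

lemma spec_nonneg (A : Matrix m n ℂ) : 0 ≤ specNorm A := norm_nonneg A

lemma spec_zero : specNorm (0 : Matrix m n ℂ) = 0 := norm_zero

lemma spec_mul (A : Matrix l m ℂ) (B : Matrix m n ℂ) :
    specNorm (A * B) ≤ specNorm A * specNorm B := Matrix.l2_opNorm_mul A B

lemma spec_conjT (A : Matrix m n ℂ) : specNorm Aᴴ = specNorm A :=
  Matrix.l2_opNorm_conjTranspose A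

lemma spec_mulVec (A : Matrix m n ℂ) (x : EuclideanSpace ℂ n) :
    ‖(EuclideanSpace.equiv m ℂ).symm (A *ᵥ x)‖ ≤ specNorm A * ‖x‖ :=
  Matrix.l2_opNorm_mulVec A x

lemma spec_def (A : Matrix m n ℂ) :
    specNorm A = ‖(Matrix.toEuclideanLin.trans LinearMap.toContinuousLinearMap) A‖ :=
  Matrix.l2_opNorm_def A

lemma spec_one_le : specNorm (1 : Matrix m m ℂ) ≤ 1 := by
  rw [spec_eq, Matrix.cstar_norm_def, _root_.map_one, ContinuousLinearMap.one_def]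
  exact ContinuousLinearMap.norm_id_le

lemma spec_one [Nonempty m] : specNorm (1 : Matrix m m ℂ) = 1 := by
  have : Nontrivial (EuclideanSpace ℂ m) := by infer_instance
  rw [spec_eq, Matrix.cstar_norm_def, _root_.map_one, ContinuousLinearMap.one_def]
  exact ContinuousLinearMap.norm_id

lemma le_sqrt_of_sq_le {a c : ℝ} (ha : 0 ≤ a) (h : a ^ 2 ≤ c) : a ≤ Real.sqrt c := by
  have := Real.sqrt_le_sqrt h
  rwa [Real.sqrt_sq ha] at this

lemma spec_sq (A : Matrix m n ℂ) : specNorm A ^ 2 = specNorm (Aᴴ * A) := by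
  rw [spec_eq, spec_eq, Matrix.l2_opNorm_conjTranspose_mul_self, sq]

lemma spec_fromRows_one_le (X : Matrix m n ℂ) :
    specNorm (fromRows (1 : Matrix n n ℂ) X) ≤ Real.sqrt (1 + specNorm X ^ 2) := by
  refine le_sqrt_of_sq_le (spec_nonneg _) ?_
  rw [spec_sq]
  have h1 : (fromRows (1 : Matrix n n ℂ) X)ᴴ * fromRows (1 : Matrix n n ℂ) X
      = 1 + Xᴴ * X := by
    rw [conjTranspose_fromRows_eq_fromCols_conjTranspose, fromCols_mul_fromRows]
    simp
  rw [h1, spec_eq]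
  calc ‖(1 : Matrix n n ℂ) + Xᴴ * X‖ ≤ ‖(1 : Matrix n n ℂ)‖ + ‖Xᴴ * X‖ := norm_add_le _ _
    _ ≤ 1 + specNorm X ^ 2 := by
        have h2 := spec_one_le (m := n)
        have h3 : ‖Xᴴ * X‖ = specNorm X ^ 2 := by rw [spec_sq, spec_eq]
        rw [spec_eq] at h2
        linarith

lemma spec_Kc_le (X' : Matrix m n ℂ) :
    specNorm ((fromRows (-X'ᴴ) (1 : Matrix m m ℂ))ᴴ) ≤ Real.sqrt (1 + specNorm X' ^ 2) := by
  rw [spec_conjT]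
  refine le_sqrt_of_sq_le (spec_nonneg _) ?_
  rw [spec_sq]
  have h1 : (fromRows (-X'ᴴ) (1 : Matrix m m ℂ))ᴴ * fromRows (-X'ᴴ) (1 : Matrix m m ℂ)
      = X' * X'ᴴ + 1 := by
    rw [conjTranspose_fromRows_eq_fromCols_conjTranspose, fromCols_mul_fromRows]
    simp
  rw [h1, spec_eq]
  calc ‖X' * X'ᴴ + (1 : Matrix m m ℂ)‖ ≤ ‖X' * X'ᴴ‖ + ‖(1 : Matrix m m ℂ)‖ := norm_add_le _ _
    _ ≤ 1 + specNorm X' ^ 2 := by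
        have h2 := spec_one_le (m := m)
        have h3 : ‖X' * X'ᴴ‖ = specNorm X' ^ 2 := by
          have : X' * X'ᴴ = (X'ᴴ)ᴴ * X'ᴴ := by rw [conjTranspose_conjTranspose]
          rw [this, ← spec_eq, ← spec_sq, spec_conjT]
        rw [spec_eq] at h2
        linarith

end Spec

section Frob
attribute [local instance] Matrix.frobeniusNormedAddCommGroup
variable {l m n : Type*} [Fintype l] [Fintype m] [Fintype n]
  [DecidableEq l] [DecidableEq m] [DecidableEq n]

lemma frob_eq (A : Matrix m n ℂ) : frobNorm A = ‖A‖ := rfl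

lemma frob_def (A : Matrix m n ℂ) :
    frobNorm A = Real.sqrt (∑ i, ∑ j, ‖A i j‖ ^ 2) := by
  rw [frob_eq, Matrix.frobenius_norm_def, Real.sqrt_eq_rpow]
  norm_num [Real.rpow_natCast]

lemma frob_nonneg (A : Matrix m n ℂ) : 0 ≤ frobNorm A := by
  rw [frob_def]; exact Real.sqrt_nonneg _

lemma frob_zero : frobNorm (0 : Matrix m n ℂ) = 0 := by
  rw [frob_eq]; exact norm_zero

lemma frob_sq (A : Matrix m n ℂ) : frobNorm A ^ 2 = ∑ i, ∑ j, ‖A i j‖ ^ 2 := by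
  rw [frob_def, Real.sq_sqrt]; positivity

lemma frob_conjT (A : Matrix m n ℂ) : frobNorm Aᴴ = frobNorm A := by
  rw [frob_eq, frob_eq, Matrix.frobenius_norm_conjTranspose]

lemma le_of_sq_le_sq {a b : ℝ} (ha : 0 ≤ a) (hb : 0 ≤ b) (h : a ^ 2 ≤ b ^ 2) : a ≤ b := by
  nlinarith

lemma spec_le_frob (A : Matrix m n ℂ) : specNorm A ≤ frobNorm A := by
  rw [spec_def]
  refine ContinuousLinearMap.opNorm_le_bound _ (frob_nonneg A) fun x => ?_
  have hx : (Matrix.toEuclideanLin.trans LinearMap.toContinuousLinearMap) A x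
      = (WithLp.equiv 2 (m → ℂ)).symm (A *ᵥ (WithLp.equiv 2 (n → ℂ)) x) := rfl
  rw [hx]
  calc ‖(WithLp.equiv 2 (m → ℂ)).symm (A *ᵥ (WithLp.equiv 2 (n → ℂ)) x)‖
      = ‖Matrix.replicateCol Unit (A *ᵥ (WithLp.equiv 2 (n → ℂ)) x)‖ :=
        (Matrix.frobenius_norm_replicateCol _).symm
    _ = ‖A * Matrix.replicateCol Unit ((WithLp.equiv 2 (n → ℂ)) x)‖ := by rw [Matrix.replicateCol_mulVec]
    _ ≤ ‖A‖ * ‖Matrix.replicateCol Unit ((WithLp.equiv 2 (n → ℂ)) x)‖ := Matrix.frobenius_norm_mul _ _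
    _ = frobNorm A * ‖x‖ := by
        rw [Matrix.frobenius_norm_replicateCol, ← frob_eq]
        congr 1

lemma frob_mul_le_spec_mul_frob (A : Matrix l m ℂ) (B : Matrix m n ℂ) :
    frobNorm (A * B) ≤ specNorm A * frobNorm B := by
  have hAB : ∀ j, (∑ i, ‖(A * B) i j‖ ^ 2) ≤ specNorm A ^ 2 * ∑ i, ‖B i j‖ ^ 2 := by
    intro j
    have h := spec_mulVec A ((WithLp.equiv 2 (m → ℂ)).symm fun i => B i j)
    rw [EuclideanSpace.norm_eq, EuclideanSpace.norm_eq] at h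
    simp only [EuclideanSpace.equiv] at h
    have hL : Real.sqrt (∑ i, ‖(A * B) i j‖ ^ 2)
        ≤ specNorm A * Real.sqrt (∑ i, ‖B i j‖ ^ 2) := by
      convert h using 4 with i <;> rfl
    have hsq := pow_le_pow_left₀ (Real.sqrt_nonneg _) hL 2
    rw [Real.sq_sqrt (by positivity), mul_pow, Real.sq_sqrt (by positivity)] at hsq
    exact hsq
  refine le_of_sq_le_sq (frob_nonneg _)
    (mul_nonneg (spec_nonneg A) (frob_nonneg _)) ?_
  rw [mul_pow, frob_sq, frob_sq, Finset.sum_comm]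
  calc ∑ j, ∑ i, ‖(A * B) i j‖ ^ 2
      ≤ ∑ j : n, specNorm A ^ 2 * ∑ i, ‖B i j‖ ^ 2 :=
        Finset.sum_le_sum fun j _ => hAB j
    _ = specNorm A ^ 2 * ∑ j, ∑ i, ‖B i j‖ ^ 2 := by rw [Finset.mul_sum]
    _ = specNorm A ^ 2 * ∑ i, ∑ j, ‖B i j‖ ^ 2 := by rw [Finset.sum_comm]

lemma frob_mul_le_frob_mul_spec (A : Matrix l m ℂ) (B : Matrix m n ℂ) :
    frobNorm (A * B) ≤ frobNorm A * specNorm B := by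
  have h := frob_mul_le_spec_mul_frob Bᴴ Aᴴ
  rw [← Matrix.conjTranspose_mul, frob_conjT, frob_conjT, spec_conjT] at h
  linarith

lemma frob_one_sq (n : Type*) [Fintype n] [DecidableEq n] :
    frobNorm (1 : Matrix n n ℂ) ^ 2 = Fintype.card n := by
  rw [frob_sq]
  have : ∀ i j : n, ‖(1 : Matrix n n ℂ) i j‖ ^ 2 = if j = i then (1 : ℝ) else 0 := by
    intro i j
    by_cases h : j = i
    · simp [h, Matrix.one_apply]
    · rw [Matrix.one_apply_ne fun hh => h hh.symm]
      simp [h]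
  simp_rw [this, Finset.sum_ite_eq']
  simp

end Frob

section
open scoped ComplexOrder

lemma one_add_self_isUnit {m n : Type*} [Fintype m] [Fintype n] [DecidableEq n]
    (X : Matrix m n ℂ) : IsUnit ((1 : Matrix n n ℂ) + Xᴴ * X) :=
  (Matrix.PosDef.one.add_posSemidef (Matrix.posSemidef_conjTranspose_mul_self X)).isUnit

end
end DP

/-- If `W` and `W̃` are the column spaces of `[I; X]` and `[I; X̃]`, with orthogonal
projections `P_W = Y (Y* Y)⁻¹ Y*` (`Y = [I; X]`), then
`‖X - X̃‖ ≤ (‖I‖² + ‖X‖²)^½ (‖I‖² + ‖X̃‖²)^½ ‖P_W - P_W̃‖`, for both the spectral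
and the Frobenius norm. -/
theorem dist_solutions_le_dist_subspaces {n m : ℕ}
    (X X' : Matrix (Fin m) (Fin n) ℂ)
    (Y Y' : Matrix (Fin n ⊕ Fin m) (Fin n) ℂ)
    (hY : Y = Matrix.fromRows (1 : Matrix (Fin n) (Fin n) ℂ) X)
    (hY' : Y' = Matrix.fromRows (1 : Matrix (Fin n) (Fin n) ℂ) X')
    (P P' : Matrix (Fin n ⊕ Fin m) (Fin n ⊕ Fin m) ℂ)
    (hP : P = Y * (Yᴴ * Y)⁻¹ * Yᴴ) (hP' : P' = Y' * (Matrix.conjTranspose Y' * Y')⁻¹ * Matrix.conjTranspose Y') :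
    specNorm (X - X') ≤
      Real.sqrt (specNorm (1 : Matrix (Fin n) (Fin n) ℂ) ^ 2 + specNorm X ^ 2) *
      Real.sqrt (specNorm (1 : Matrix (Fin n) (Fin n) ℂ) ^ 2 + specNorm X' ^ 2) *
        specNorm (P - P') ∧
    frobNorm (X - X') ≤
      Real.sqrt (frobNorm (1 : Matrix (Fin n) (Fin n) ℂ) ^ 2 + frobNorm X ^ 2) *
      Real.sqrt (frobNorm (1 : Matrix (Fin n) (Fin n) ℂ) ^ 2 + frobNorm X' ^ 2) *
        frobNorm (P - P') := by
  rcases Nat.eq_zero_or_pos n with hn | hn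
  · have hXX : X - X' = 0 := by
      ext i j
      exact absurd j.2 (by omega)
    rw [hXX, DP.spec_zero, DP.frob_zero]
    constructor
    · exact mul_nonneg (mul_nonneg (Real.sqrt_nonneg _) (Real.sqrt_nonneg _))
        (DP.spec_nonneg _)
    · exact mul_nonneg (mul_nonneg (Real.sqrt_nonneg _) (Real.sqrt_nonneg _))
        (DP.frob_nonneg _)
  · haveI : Nonempty (Fin n) := ⟨⟨0, hn⟩⟩
    set K : Matrix (Fin n ⊕ Fin m) (Fin m) ℂ :=
      fromRows (-X'ᴴ) (1 : Matrix (Fin m) (Fin m) ℂ) with hK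
    have hYY : Yᴴ * Y = 1 + Xᴴ * X := by
      rw [hY, conjTranspose_fromRows_eq_fromCols_conjTranspose, fromCols_mul_fromRows]
      simp
    have hdet : IsUnit (Yᴴ * Y).det := by
      rw [hYY]
      exact (Matrix.isUnit_iff_isUnit_det _).mp (DP.one_add_self_isUnit X)
    have hPY : P * Y = Y := by
      rw [hP, Matrix.mul_assoc, Matrix.mul_assoc, Matrix.nonsing_inv_mul _ hdet, Matrix.mul_one]
    have hKY' : Kᴴ * Y' = 0 := by
      rw [hK, hY', conjTranspose_fromRows_eq_fromCols_conjTranspose, fromCols_mul_fromRows]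
      simp
    have hKP' : Kᴴ * P' = 0 := by
      rw [hP', ← Matrix.mul_assoc, ← Matrix.mul_assoc, hKY', Matrix.zero_mul, Matrix.zero_mul]
    have hKY : Kᴴ * Y = X - X' := by
      rw [hK, hY, conjTranspose_fromRows_eq_fromCols_conjTranspose, fromCols_mul_fromRows]
      simp [sub_eq_neg_add]
    have hid : Kᴴ * ((P - P') * Y) = X - X' := by
      rw [Matrix.sub_mul, hPY, Matrix.mul_sub, hKY, ← Matrix.mul_assoc, hKP',
        Matrix.zero_mul, sub_zero]
    have e1 : specNorm (1 : Matrix (Fin n) (Fin n) ℂ) = 1 := DP.spec_one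
    have hKb : specNorm Kᴴ ≤ Real.sqrt (1 + specNorm X' ^ 2) := DP.spec_Kc_le X'
    have hYb : specNorm Y ≤ Real.sqrt (1 + specNorm X ^ 2) := by
      rw [hY]; exact DP.spec_fromRows_one_le X
    constructor
    · rw [e1, one_pow]
      calc specNorm (X - X') = specNorm (Kᴴ * ((P - P') * Y)) := by rw [hid]
        _ ≤ specNorm Kᴴ * specNorm ((P - P') * Y) := DP.spec_mul _ _
        _ ≤ specNorm Kᴴ * (specNorm (P - P') * specNorm Y) :=
            mul_le_mul_of_nonneg_left (DP.spec_mul _ _) (DP.spec_nonneg _)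
        _ ≤ Real.sqrt (1 + specNorm X' ^ 2) *
              (specNorm (P - P') * Real.sqrt (1 + specNorm X ^ 2)) := by
            apply mul_le_mul hKb
              (mul_le_mul_of_nonneg_left hYb (DP.spec_nonneg _))
              (mul_nonneg (DP.spec_nonneg _) (DP.spec_nonneg _))
              (Real.sqrt_nonneg _)
        _ = Real.sqrt (1 + specNorm X ^ 2) * Real.sqrt (1 + specNorm X' ^ 2) *
              specNorm (P - P') := by ring
    · have hone : (1 : ℝ) ≤ frobNorm (1 : Matrix (Fin n) (Fin n) ℂ) ^ 2 := by
        rw [DP.frob_one_sq]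
        simp only [Fintype.card_fin]
        exact_mod_cast hn
      have hsx : Real.sqrt (1 + specNorm X ^ 2)
          ≤ Real.sqrt (frobNorm (1 : Matrix (Fin n) (Fin n) ℂ) ^ 2 + frobNorm X ^ 2) := by
        apply Real.sqrt_le_sqrt
        have := pow_le_pow_left₀ (DP.spec_nonneg X) (DP.spec_le_frob X) 2
        linarith
      have hsx' : Real.sqrt (1 + specNorm X' ^ 2)
          ≤ Real.sqrt (frobNorm (1 : Matrix (Fin n) (Fin n) ℂ) ^ 2 + frobNorm X' ^ 2) := by
        apply Real.sqrt_le_sqrt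
        have := pow_le_pow_left₀ (DP.spec_nonneg X') (DP.spec_le_frob X') 2
        linarith
      calc frobNorm (X - X') = frobNorm (Kᴴ * ((P - P') * Y)) := by rw [hid]
        _ ≤ specNorm Kᴴ * frobNorm ((P - P') * Y) := DP.frob_mul_le_spec_mul_frob _ _
        _ ≤ specNorm Kᴴ * (frobNorm (P - P') * specNorm Y) :=
            mul_le_mul_of_nonneg_left (DP.frob_mul_le_frob_mul_spec _ _) (DP.spec_nonneg _)
        _ ≤ Real.sqrt (frobNorm (1 : Matrix (Fin n) (Fin n) ℂ) ^ 2 + frobNorm X' ^ 2) *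
              (frobNorm (P - P') *
                Real.sqrt (frobNorm (1 : Matrix (Fin n) (Fin n) ℂ) ^ 2 + frobNorm X ^ 2)) := by
            apply mul_le_mul (hKb.trans hsx')
              (mul_le_mul_of_nonneg_left (hYb.trans hsx) (DP.frob_nonneg _))
              (mul_nonneg (DP.frob_nonneg _) (DP.spec_nonneg _))
              (Real.sqrt_nonneg _)
        _ = Real.sqrt (frobNorm (1 : Matrix (Fin n) (Fin n) ℂ) ^ 2 + frobNorm X ^ 2) *
              Real.sqrt (frobNorm (1 : Matrix (Fin n) (Fin n) ℂ) ^ 2 + frobNorm X' ^ 2) *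
              frobNorm (P - P') := by ring
end

section
/- Let H ∈ ℂ^{(n+m)×(n+m)} have spectrum the disjoint union of Λ₁ = {ξ₁,…,ξ_k} and Λ₂ = {ξ_{k+1},…,ξ_{n+m}}. Let V, U ∈ ℂ^{(n+m)×k} have orthonormal columns spanning the right and left invariant subspaces of H associated with Λ₁, respectively, and let s be a scalar. Then the matrix Ĥ = H(I + s V (U*V)⁻¹ U*) satisfies: (a) every right invariant subspace of H is a right invariant subspace of Ĥ; (b) the eigenvalues of Ĥ are {(1+s)ξ₁, …, (1+s)ξ_k, ξ_{k+1}, …, ξ_{n+m}} (counted with multiplicity). -/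
open Matrix Polynomial

lemma charpoly_fromBlocks {R : Type*} [CommRing R] {ι₁ ι₂ : Type*} [Fintype ι₁] [Fintype ι₂]
    [DecidableEq ι₁] [DecidableEq ι₂] (A : Matrix ι₁ ι₁ R) (D : Matrix ι₂ ι₂ R) :
    (fromBlocks A 0 0 D).charpoly = A.charpoly * D.charpoly := by
  have h : charmatrix (fromBlocks A 0 0 D) = fromBlocks (charmatrix A) 0 0 (charmatrix D) := by
    ext (i|i) (j|j) <;>
      simp [charmatrix_apply, fromBlocks, diagonal_apply, Matrix.one_apply]
  rw [Matrix.charpoly, h, Matrix.det_fromBlocks_zero₂₁]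
  rfl

lemma charpoly_smul_matrix {ι κ : Type*} [Fintype ι] [DecidableEq ι] [Fintype κ]
    (A : Matrix ι ι ℂ) (c : ℂ) (t : Finset κ) (ξ : κ → ℂ)
    (hA : A.charpoly = ∏ i ∈ t, (X - C (ξ i))) :
    (c • A).charpoly = ∏ i ∈ t, (X - C (c * ξ i)) := by
  have hcard : t.card = Fintype.card ι := by
    have h1 : A.charpoly.natDegree = Fintype.card ι := A.charpoly_natDegree_eq_dim
    rw [hA] at h1
    rw [← h1, Polynomial.natDegree_prod _ _ (fun i _ => X_sub_C_ne_zero (ξ i))]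
    simp [natDegree_X_sub_C]
  rcases eq_or_ne c 0 with rfl | hc
  · simp only [zero_smul, zero_mul, map_zero]
    have : (0 : Matrix ι ι ℂ).charpoly = X ^ Fintype.card ι := by
      rw [Matrix.charpoly, charmatrix]
      simp only [map_zero, sub_zero]
      rw [show (Matrix.scalar ι X) = Matrix.diagonal (fun _ => (X : ℂ[X])) from rfl,
        Matrix.det_diagonal]
      simp
    rw [this, ← hcard]
    simp [Finset.prod_const]
  · set σ : ℂ[X] →ₐ[ℂ] ℂ[X] := Polynomial.aeval (C c⁻¹ * X) with hσ
    have key : ∀ B : Matrix ι ι ℂ, σ B.charpoly = (C c⁻¹) ^ Fintype.card ι * (c • B).charpoly := by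
      intro B
      have hmap : (charmatrix B).map σ = (C c⁻¹) • charmatrix (c • B) := by
        refine Matrix.ext fun i j => ?_
        by_cases hij : i = j
        · subst hij
          simp only [σ, Matrix.map_apply, charmatrix_apply, diagonal_apply_eq, Matrix.smul_apply,
            smul_eq_mul, map_sub, aeval_X, aeval_C, algebraMap_eq]
          rw [mul_sub, ← C_mul, inv_mul_cancel_left₀ hc]
        · simp only [σ, Matrix.map_apply, charmatrix_apply, diagonal_apply_ne _ hij,
            Matrix.smul_apply, smul_eq_mul, map_sub, map_zero, map_neg, aeval_C, algebraMap_eq,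
            zero_sub]
          rw [mul_neg, ← C_mul, inv_mul_cancel_left₀ hc]
      rw [Matrix.charpoly, AlgHom.map_det, AlgHom.mapMatrix_apply, hmap, Matrix.det_smul,
          ← Matrix.charpoly]
    have h1 := key A
    rw [hA] at h1
    have h2 : σ (∏ i ∈ t, (X - C (ξ i))) = (C c⁻¹) ^ t.card * ∏ i ∈ t, (X - C (c * ξ i)) := by
      rw [map_prod, ← Finset.prod_const, ← Finset.prod_mul_distrib]
      refine Finset.prod_congr rfl fun i _ => ?_
      simp only [σ, map_sub, aeval_X, aeval_C, algebraMap_eq]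
      rw [mul_sub, ← C_mul, inv_mul_cancel_left₀ hc]
    rw [h2, hcard] at h1
    have hC : (C c⁻¹ : ℂ[X]) ^ Fintype.card ι ≠ 0 := by
      apply pow_ne_zero
      simpa using inv_ne_zero hc
    exact (mul_left_cancel₀ hC h1).symm

lemma charpoly_toLin' {N : ℕ} (A : Matrix (Fin N) (Fin N) ℂ) :
    (Matrix.toLin' A).charpoly = A.charpoly := by
  rw [← LinearMap.charpoly_toMatrix (Matrix.toLin' A) (Pi.basisFun ℂ (Fin N)),
    LinearMap.toMatrix_eq_toMatrix', LinearMap.toMatrix'_toLin']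

lemma hasEigenvalue_of_isRoot_charpoly {W : Type*} [AddCommGroup W] [Module ℂ W]
    [FiniteDimensional ℂ W] (f : Module.End ℂ W) {μ : ℂ} (h : f.charpoly.IsRoot μ) :
    f.HasEigenvalue μ := by
  set b := Module.finBasis ℂ W
  set A := LinearMap.toMatrix b b f with hA
  have hcp : A.charpoly = f.charpoly := LinearMap.charpoly_toMatrix f b
  have hdet : (μ • (1 : Matrix (Fin (Module.finrank ℂ W)) (Fin (Module.finrank ℂ W)) ℂ) - A).det
      = 0 := by
    have : ((charmatrix A).map (evalRingHom μ)) = μ • 1 - A := by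
      refine Matrix.ext fun i j => ?_
      by_cases hij : i = j
      · subst hij
        simp [charmatrix_apply, Matrix.one_apply]
      · simp [charmatrix_apply, diagonal_apply_ne _ hij, Matrix.one_apply_ne hij,
          Matrix.sub_apply]
    have h2 : (evalRingHom μ) A.charpoly = 0 := by
      rw [hcp]; exact h
    rw [Matrix.charpoly, RingHom.map_det, RingHom.mapMatrix_apply, this] at h2
    exact h2
  obtain ⟨v, hv0, hv⟩ := Matrix.exists_mulVec_eq_zero_iff.mpr hdet
  have hAv : A *ᵥ v = μ • v := by
    have := congrFun hv
    funext i
    have h3 := this i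
    simp [Matrix.sub_mulVec, Matrix.smul_mulVec, Matrix.one_mulVec, sub_eq_zero] at h3
    simpa using h3.symm
  set x := b.equivFun.symm v with hx
  have hx0 : x ≠ 0 := by
    simp only [hx, ne_eq, EmbeddingLike.map_eq_zero_iff]
    exact hv0
  have hfx : f x = μ • x := by
    have hf : f = Matrix.toLin b b A := (Matrix.toLin_toMatrix b b f).symm
    rw [hf, Matrix.toLin_apply]
    have hrepr : ⇑(b.repr x) = v := by
      simp [hx, Module.Basis.equivFun, Finsupp.equivFunOnFinite]; rfl
    rw [hrepr, hAv, hx]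
    rw [Module.Basis.equivFun_symm_apply]
    rw [Finset.smul_sum]
    exact Finset.sum_congr rfl fun i _ => by rw [Pi.smul_apply, smul_assoc]
  exact Module.End.hasEigenvalue_of_hasEigenvector
    ⟨Module.End.mem_eigenspace_iff.mpr hfx, hx0⟩

lemma charpoly_eq_restrict_mul {W : Type*} [AddCommGroup W] [Module ℂ W]
    [FiniteDimensional ℂ W] (f : Module.End ℂ W) {p q : Submodule ℂ W} (h : IsCompl p q)
    (hp : ∀ x ∈ p, f x ∈ p) (hq : ∀ x ∈ q, f x ∈ q) :
    f.charpoly = (f.restrict hp).charpoly * (f.restrict hq).charpoly := by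
  set e := Submodule.prodEquivOfIsCompl p q h with he
  set g : Module.End ℂ (p × q) := e.symm.toLinearMap ∘ₗ f ∘ₗ e.toLinearMap with hg
  have hgeq : g = (f.restrict hp).prodMap (f.restrict hq) := by
    apply LinearMap.ext
    rintro ⟨x, y⟩
    apply e.injective
    have h1 : e (g (x, y)) = f (e (x, y)) := by
      simp [hg]
    rw [h1]
    rw [Submodule.coe_prodEquivOfIsCompl' , Submodule.coe_prodEquivOfIsCompl']
    simp only [LinearMap.prodMap_apply]
    rw [map_add]
    congr 1 <;> simp [LinearMap.restrict_apply]
  set b₁ := Module.finBasis ℂ p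
  set b₂ := Module.finBasis ℂ q
  set c := b₁.prod b₂ with hc
  set b := c.map e with hb
  have h1 : f.charpoly = (LinearMap.toMatrix b b f).charpoly :=
    (LinearMap.charpoly_toMatrix f b).symm
  have h2 : LinearMap.toMatrix b b f = LinearMap.toMatrix c c g := by
    refine Matrix.ext fun i j => ?_
    rw [LinearMap.toMatrix_apply, LinearMap.toMatrix_apply, hb, Module.Basis.map_apply, Module.Basis.map_repr]
    simp [hg]
  rw [h1, h2, hgeq, LinearMap.toMatrix_prodMap, charpoly_fromBlocks,
    LinearMap.charpoly_toMatrix, LinearMap.charpoly_toMatrix]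

lemma left_right_orth {N : ℕ} (H : Matrix (Fin N) (Fin N) ℂ) {lam mu : ℂ} (hne : lam ≠ mu)
    {u x : Fin N → ℂ}
    (hu : u ∈ Module.End.maxGenEigenspace (Matrix.toLin' Hᴴ) (starRingEnd ℂ lam))
    (hx : x ∈ Module.End.maxGenEigenspace (Matrix.toLin' H) mu) :
    star u ⬝ᵥ x = 0 := by
  obtain ⟨p, hp⟩ := (Module.End.mem_maxGenEigenspace _ _ _).mp hu
  set T : Module.End ℂ (Fin N → ℂ) := Matrix.toLin' H with hT
  set g : Module.End ℂ (Fin N → ℂ) := T - lam • 1 with hgdef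
  set E : Submodule ℂ (Fin N → ℂ) := T.maxGenEigenspace mu with hE
  have hcomm : Commute T g := by
    simp only [hgdef]
    exact (Commute.refl T).sub_right ((Commute.one_right T).smul_right lam)
  have hmaps : ∀ y ∈ E, g y ∈ E :=
    fun y hy => Module.End.mapsTo_maxGenEigenspace_of_comm hcomm mu hy
  set gr : Module.End ℂ E := g.restrict hmaps with hgr
  have hinj : Function.Injective gr := by
    rw [← LinearMap.ker_eq_bot]
    rw [Submodule.eq_bot_iff]
    rintro ⟨y, hy⟩ hker
    have hgy : g y = 0 := congrArg Subtype.val hker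
    have hy1 : y ∈ T.maxGenEigenspace lam := by
      rw [Module.End.mem_maxGenEigenspace]
      exact ⟨1, by simpa [hgdef] using hgy⟩
    have hdisj := Module.End.disjoint_genEigenspace T hne ⊤ ⊤
    have : y = 0 := by
      have := hdisj.le_bot (Submodule.mem_inf.mpr ⟨hy1, hy⟩)
      simpa using this
    simp [this]
  have hsurj : Function.Surjective gr := (LinearMap.injective_iff_surjective).mp hinj
  have hsurjp : Function.Surjective ⇑(gr ^ p) := by
    rw [Module.End.coe_pow]
    exact hsurj.iterate p
  obtain ⟨⟨y, hy⟩, hyx⟩ := hsurjp ⟨x, hx⟩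
  have hgpy : (g ^ p) y = x := by
    rw [Module.End.pow_restrict p hmaps] at hyx
    exact congrArg Subtype.val hyx
  set B : Matrix (Fin N) (Fin N) ℂ := (H - lam • 1) ^ p with hB
  have hcoe : ∀ (M : Matrix (Fin N) (Fin N) ℂ), Matrix.toLin' M = Matrix.toLinAlgEquiv' M :=
    fun M => LinearMap.ext fun v => by
      rw [Matrix.toLin'_apply, Matrix.toLinAlgEquiv'_apply]
  have hBlin : Matrix.toLin' B = g ^ p := by
    rw [hcoe, hB, map_pow, map_sub, _root_.map_smul, _root_.map_one, hgdef, hT, hcoe]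
  have hBx : B *ᵥ y = x := by
    rw [← Matrix.toLin'_apply, hBlin]
    exact hgpy
  have hBH : Bᴴ = (Hᴴ - (starRingEnd ℂ lam) • 1) ^ p := by
    rw [hB, conjTranspose_pow, conjTranspose_sub, conjTranspose_smul, conjTranspose_one]
    rfl
  have hBHu : Bᴴ *ᵥ u = 0 := by
    rw [← Matrix.toLin'_apply, hBH, hcoe, map_pow, ← hcoe]
    have h5 : Matrix.toLin' (Hᴴ - (starRingEnd ℂ lam) • 1)
        = Matrix.toLin' Hᴴ - (starRingEnd ℂ lam) • 1 := by
      rw [hcoe, map_sub, _root_.map_smul, _root_.map_one, ← hcoe]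
    rw [h5]
    exact hp
  calc star u ⬝ᵥ x = star u ⬝ᵥ (B *ᵥ y) := by rw [hBx]
    _ = (star u ᵥ* B) ⬝ᵥ y := dotProduct_mulVec _ _ _
    _ = star (Bᴴ *ᵥ u) ⬝ᵥ y := by rw [star_mulVec, conjTranspose_conjTranspose]
    _ = 0 := by rw [hBHu, star_zero, zero_dotProduct]
lemma disjoint_finset_biSup' {α ι : Type*} [CompleteLattice α] [IsModularLattice α]
    {f : ι → α} (hf : iSupIndep f) {s t : Finset ι} (hst : ∀ i ∈ s, i ∉ t) :
    Disjoint (⨆ i ∈ (s : Set ι), f i) (⨆ i ∈ (t : Set ι), f i) := by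
  classical
  induction s using Finset.induction_on with
  | empty => simp
  | @insert a s ha ih =>
    have h1 : Disjoint (f a) (⨆ i ∈ ((s ∪ t : Finset ι) : Set ι), f i) := by
      refine hf.disjoint_biSup ?_
      simp only [Finset.coe_union, Set.mem_union, Finset.mem_coe]
      push_neg
      exact ⟨ha, hst a (Finset.mem_insert_self a s)⟩
    rw [Finset.coe_union, iSup_union] at h1
    have ih' := ih fun i hi => hst i (Finset.mem_insert_of_mem hi)
    rw [Finset.coe_insert, iSup_insert]
    exact Disjoint.disjoint_sup_left_of_disjoint_sup_right ih' h1

set_option maxHeartbeats 1600000 in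
/-- **The subspace shift.** Let the spectrum of `H` (with multiplicity) be
`ξ₁, …, ξ_{n+m}`, where `Λ₁ = {ξ₁,…,ξ_k}` and `Λ₂ = {ξ_{k+1},…,ξ_{n+m}}` are disjoint.
Let `V`, `U` have orthonormal columns spanning the right and left invariant subspaces of
`H` associated with `Λ₁`. Then `Ĥ = H (I + s V (U*V)⁻¹ U*)` has the same right invariant
subspaces as `H`, and its eigenvalues are `(1+s)ξ₁, …, (1+s)ξ_k, ξ_{k+1}, …, ξ_{n+m}`. -/
theorem subspace_shift {n m k : ℕ} (hk : k ≤ n + m)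
    (H : Matrix (Fin (n + m)) (Fin (n + m)) ℂ) (ξ : Fin (n + m) → ℂ) (s : ℂ)
    (hchar : H.charpoly = ∏ i, (X - C (ξ i)))
    (hdisj : ∀ i j : Fin (n + m), (i : ℕ) < k → k ≤ (j : ℕ) → ξ i ≠ ξ j)
    (V U : Matrix (Fin (n + m)) (Fin k) ℂ)
    (hVo : Vᴴ * V = 1) (hUo : Uᴴ * U = 1)
    (hVspan : Submodule.span ℂ (Set.range Vᵀ) =
      ⨆ i : Fin (n + m), ⨆ (_ : (i : ℕ) < k),
        Module.End.maxGenEigenspace (Matrix.toLin' H) (ξ i))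
    (hUspan : Submodule.span ℂ (Set.range Uᵀ) =
      ⨆ i : Fin (n + m), ⨆ (_ : (i : ℕ) < k),
        Module.End.maxGenEigenspace (Matrix.toLin' Hᴴ) (starRingEnd ℂ (ξ i)))
    (hUV : IsUnit (Uᴴ * V)) :
    (∀ p : Submodule ℂ (Fin (n + m) → ℂ),
        p.map (Matrix.toLin' H) ≤ p →
        p.map (Matrix.toLin' (H * (1 + s • (V * (Uᴴ * V)⁻¹ * Uᴴ)))) ≤ p) ∧
    (H * (1 + s • (V * (Uᴴ * V)⁻¹ * Uᴴ))).charpoly =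
      ∏ i : Fin (n + m), (X - C (if (i : ℕ) < k then (1 + s) * ξ i else ξ i)) := by
  classical
  set T : Module.End ℂ (Fin (n + m) → ℂ) := Matrix.toLin' H with hT
  set P : Matrix (Fin (n + m)) (Fin (n + m)) ℂ := V * (Uᴴ * V)⁻¹ * Uᴴ with hPdef
  set W₁ : Submodule ℂ (Fin (n + m) → ℂ) :=
    ⨆ i : Fin (n + m), ⨆ _ : (i : ℕ) < k, T.maxGenEigenspace (ξ i) with hW₁def
  set W₂ : Submodule ℂ (Fin (n + m) → ℂ) :=
    ⨆ i : Fin (n + m), ⨆ _ : ¬ (i : ℕ) < k, T.maxGenEigenspace (ξ i) with hW₂def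
  have hUVdet : IsUnit (Uᴴ * V).det := (Matrix.isUnit_iff_isUnit_det _).mp hUV
  have hUVinv : (Uᴴ * V)⁻¹ * (Uᴴ * V) = 1 := Matrix.nonsing_inv_mul _ hUVdet
  -- P acts as identity on W₁
  have hW₁ran : W₁ = LinearMap.range (Matrix.mulVecLin V) := by
    rw [Matrix.range_mulVecLin]; exact hVspan.symm
  have hPV : ∀ x ∈ W₁, P *ᵥ x = x := by
    intro x hx
    rw [hW₁ran] at hx
    obtain ⟨c, rfl⟩ := hx
    show P *ᵥ (V *ᵥ c) = V *ᵥ c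
    rw [Matrix.mulVec_mulVec, hPdef]
    have hVid : V * (Uᴴ * V)⁻¹ * Uᴴ * V = V := by
      rw [Matrix.mul_assoc (V * (Uᴴ * V)⁻¹) Uᴴ V, Matrix.mul_assoc V ((Uᴴ * V)⁻¹) (Uᴴ * V),
        hUVinv, Matrix.mul_one]
    rw [hVid]
  -- P kills W₂
  have hUW₂le : W₂ ≤ LinearMap.ker (Matrix.mulVecLin Uᴴ) := by
    refine iSup_le fun j => iSup_le fun hjk => ?_
    intro x hx
    rw [LinearMap.mem_ker]
    show Uᴴ *ᵥ x = 0
    funext jc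
    have hentry : (Uᴴ *ᵥ x) jc = star (Uᵀ jc) ⬝ᵥ x := by
      simp [Matrix.mulVec, dotProduct, Matrix.conjTranspose_apply]
    set L : (Fin (n + m) → ℂ) →ₗ[ℂ] ℂ :=
      { toFun := fun y => y ⬝ᵥ star x
        map_add' := fun a b => add_dotProduct a b (star x)
        map_smul' := fun c a => smul_dotProduct c a (star x) } with hL
    have hcol : Uᵀ jc ∈ Submodule.span ℂ (Set.range Uᵀ) := Submodule.subset_span ⟨jc, rfl⟩
    have hker : Submodule.span ℂ (Set.range Uᵀ) ≤ LinearMap.ker L := by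
      rw [hUspan]
      refine iSup_le fun i => iSup_le fun hik => ?_
      intro u hu
      rw [LinearMap.mem_ker]
      have horth : star u ⬝ᵥ x = 0 :=
        left_right_orth H (hdisj i j hik (not_lt.mp hjk)) hu hx
      show u ⬝ᵥ star x = 0
      have h6 : star (star u ⬝ᵥ x) = star x ⬝ᵥ u := by
        rw [Matrix.star_dotProduct, star_star]
      rw [dotProduct_comm, ← h6, horth, star_zero]
    have hLz := hker hcol
    rw [LinearMap.mem_ker] at hLz
    have hLz' : Uᵀ jc ⬝ᵥ star x = 0 := hLz
    have h6 : star (Uᵀ jc) ⬝ᵥ x = 0 := by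
      rw [Matrix.star_dotProduct, dotProduct_comm, hLz', star_zero]
    rw [hentry, h6]
    simp
  have hUW₂ : ∀ x ∈ W₂, Uᴴ *ᵥ x = 0 := fun x hx => hUW₂le hx
  have hPW₂ : ∀ x ∈ W₂, P *ᵥ x = 0 := by
    intro x hx
    rw [hPdef, ← Matrix.mulVec_mulVec, hUW₂ x hx, Matrix.mulVec_zero]
  -- eigenvalues are among the ξ i
  have h_not_eig : ∀ μ : ℂ, (∀ i, ξ i ≠ μ) → T.maxGenEigenspace μ = ⊥ := by
    intro μ hμ
    by_contra hbot
    obtain ⟨x, hx, hx0⟩ := Submodule.exists_mem_ne_zero_of_ne_bot hbot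
    obtain ⟨l, hl⟩ := (Module.End.mem_maxGenEigenspace _ _ _).mp hx
    have hgen : T.HasGenEigenvalue μ l := by
      rw [Module.End.hasGenEigenvalue_iff]
      intro hb
      have : x ∈ T.genEigenspace μ l := Module.End.mem_genEigenspace_nat.mpr hl
      rw [hb] at this
      exact hx0 (Submodule.mem_bot ℂ |>.mp this)
    have heig : T.HasEigenvalue μ := Module.End.hasEigenvalue_of_hasGenEigenvalue hgen
    have hroot : (minpoly ℂ T).IsRoot μ := Module.End.hasEigenvalue_iff_isRoot.mp heig
    have hdvd : minpoly ℂ T ∣ T.charpoly :=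
      minpoly.dvd ℂ T (LinearMap.aeval_self_charpoly T)
    have hrootc : T.charpoly.IsRoot μ := hroot.dvd hdvd
    rw [hT, _root_.charpoly_toLin', hchar] at hrootc
    rw [Polynomial.IsRoot, Polynomial.eval_prod] at hrootc
    obtain ⟨i, -, hi⟩ := Finset.prod_eq_zero_iff.mp hrootc
    simp only [Polynomial.eval_sub, Polynomial.eval_X, Polynomial.eval_C, sub_eq_zero] at hi
    exact hμ i hi.symm
  -- W₁ ⊔ W₂ = ⊤
  have hsup : W₁ ⊔ W₂ = ⊤ := by
    refine le_antisymm le_top ?_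
    rw [← Module.End.iSup_maxGenEigenspace_eq_top T]
    refine iSup_le fun μ => ?_
    by_cases hμ : ∃ i, ξ i = μ
    · obtain ⟨i, rfl⟩ := hμ
      by_cases hik : (i : ℕ) < k
      · exact le_trans (le_iSup_of_le i (le_iSup (fun _ => T.maxGenEigenspace (ξ i)) hik)) le_sup_left
      · exact le_trans (le_iSup_of_le i (le_iSup (fun _ => T.maxGenEigenspace (ξ i)) hik)) le_sup_right
    · push_neg at hμ
      rw [h_not_eig μ hμ]
      exact bot_le
  -- finsets of eigenvalues
  set S₁f : Finset ℂ := (Finset.univ.filter fun i : Fin (n + m) => (i : ℕ) < k).image ξ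
    with hS₁f
  set S₂f : Finset ℂ := (Finset.univ.filter fun i : Fin (n + m) => ¬ (i : ℕ) < k).image ξ
    with hS₂f
  have hS₁mem : ∀ {μ}, μ ∈ S₁f ↔ ∃ i : Fin (n + m), (i : ℕ) < k ∧ ξ i = μ := by
    intro μ
    simp [hS₁f, Finset.mem_image, Finset.mem_filter]
  have hS₂mem : ∀ {μ}, μ ∈ S₂f ↔ ∃ i : Fin (n + m), ¬ (i : ℕ) < k ∧ ξ i = μ := by
    intro μ
    simp [hS₂f, Finset.mem_image, Finset.mem_filter]
  have hS₁S₂ : ∀ μ ∈ S₁f, μ ∉ S₂f := by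
    intro μ h1 h2
    obtain ⟨i, hik, rfl⟩ := hS₁mem.mp h1
    obtain ⟨j, hjk, hji⟩ := hS₂mem.mp h2
    exact hdisj i j hik (not_lt.mp hjk) hji.symm
  have hW₁S : W₁ = ⨆ μ ∈ (S₁f : Set ℂ), T.maxGenEigenspace μ := by
    refine le_antisymm (iSup_le fun i => iSup_le fun hik => ?_) (iSup_le fun μ => iSup_le fun hμ => ?_)
    · exact le_iSup₂_of_le (ξ i) (by exact_mod_cast hS₁mem.mpr ⟨i, hik, rfl⟩) le_rfl
    · obtain ⟨i, hik, rfl⟩ := hS₁mem.mp (by exact_mod_cast hμ)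
      exact le_iSup_of_le i (le_iSup (fun _ => T.maxGenEigenspace (ξ i)) hik)
  have hW₂S : W₂ = ⨆ μ ∈ (S₂f : Set ℂ), T.maxGenEigenspace μ := by
    refine le_antisymm (iSup_le fun i => iSup_le fun hik => ?_) (iSup_le fun μ => iSup_le fun hμ => ?_)
    · exact le_iSup₂_of_le (ξ i) (by exact_mod_cast hS₂mem.mpr ⟨i, hik, rfl⟩) le_rfl
    · obtain ⟨i, hik, rfl⟩ := hS₂mem.mp (by exact_mod_cast hμ)
      exact le_iSup_of_le i (le_iSup (fun _ => T.maxGenEigenspace (ξ i)) hik)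
  have hdisjW : Disjoint W₁ W₂ := by
    rw [hW₁S, hW₂S]
    exact disjoint_finset_biSup' (Module.End.independent_maxGenEigenspace T) hS₁S₂
  have hcompl : IsCompl W₁ W₂ := ⟨hdisjW, codisjoint_iff.mpr hsup⟩
  -- invariance of the pieces under T
  have hTE : ∀ μ : ℂ, ∀ x ∈ T.maxGenEigenspace μ, T x ∈ T.maxGenEigenspace μ :=
    fun μ x hx => Module.End.mapsTo_maxGenEigenspace_of_comm (Commute.refl T) μ hx
  have hTW₁ : ∀ x ∈ W₁, T x ∈ W₁ := by
    have hmap : W₁.map T ≤ W₁ := by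
      rw [hW₁def, Submodule.map_iSup]
      refine iSup_le fun i => ?_
      rw [Submodule.map_iSup]
      refine iSup_le fun hik => ?_
      refine le_trans ?_ (le_iSup_of_le i (le_iSup (fun _ => T.maxGenEigenspace (ξ i)) hik))
      rintro y ⟨x, hx, rfl⟩
      exact hTE _ x hx
    exact fun x hx => hmap (Submodule.mem_map_of_mem hx)
  have hTW₂ : ∀ x ∈ W₂, T x ∈ W₂ := by
    have hmap : W₂.map T ≤ W₂ := by
      rw [hW₂def, Submodule.map_iSup]
      refine iSup_le fun i => ?_
      rw [Submodule.map_iSup]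
      refine iSup_le fun hik => ?_
      refine le_trans ?_ (le_iSup_of_le i (le_iSup (fun _ => T.maxGenEigenspace (ξ i)) hik))
      rintro y ⟨x, hx, rfl⟩
      exact hTE _ x hx
    exact fun x hx => hmap (Submodule.mem_map_of_mem hx)
  -- description of the shifted matrix
  have hHh_apply : ∀ z, Matrix.toLin' (H * (1 + s • P)) z = T z + s • T (P *ᵥ z) := by
    intro z
    rw [Matrix.toLin'_mul, LinearMap.comp_apply]
    have : Matrix.toLin' (1 + s • P) z = z + s • (P *ᵥ z) := by
      rw [map_add, _root_.map_smul, Matrix.toLin'_one]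
      simp [Matrix.toLin'_apply]
    rw [this, map_add, _root_.map_smul, hT]
  -- Part (a)
  have parta : ∀ p : Submodule ℂ (Fin (n + m) → ℂ),
      p.map T ≤ p → p.map (Matrix.toLin' (H * (1 + s • P))) ≤ p := by
    intro p hp
    have hmapsT : ∀ x ∈ p, T x ∈ p := fun x hx => hp (Submodule.mem_map_of_mem hx)
    have hdecomp : (⨆ μ : ℂ, (p ⊓ T.maxGenEigenspace μ)) = p := by
      have h5 := Module.End.iSup_maxGenEigenspace_eq_top (T.restrict hmapsT)
      calc (⨆ μ : ℂ, (p ⊓ T.maxGenEigenspace μ))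
          = ⨆ μ : ℂ, Submodule.map p.subtype
              (Module.End.maxGenEigenspace (T.restrict hmapsT) μ) := by
            refine iSup_congr fun μ => ?_
            exact Submodule.inf_genEigenspace T p hmapsT
        _ = Submodule.map p.subtype (⨆ μ : ℂ, Module.End.maxGenEigenspace (T.restrict hmapsT) μ) := by
            rw [Submodule.map_iSup]
        _ = p := by rw [h5, Submodule.map_top, Submodule.range_subtype]
    have hPp : ∀ z ∈ p, P *ᵥ z ∈ p := by
      have hle : p ≤ Submodule.comap (Matrix.mulVecLin P) p := by
        conv_lhs => rw [← hdecomp]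
        refine iSup_le fun μ => ?_
        rintro z ⟨hzp, hzE⟩
        rw [Submodule.mem_comap]
        show P *ᵥ z ∈ p
        by_cases hμ : ∃ i, ξ i = μ
        · obtain ⟨i, rfl⟩ := hμ
          by_cases hik : (i : ℕ) < k
          · have hzW : z ∈ W₁ := (le_iSup_of_le i (le_iSup (fun _ => T.maxGenEigenspace (ξ i)) hik) : T.maxGenEigenspace (ξ i) ≤ W₁) hzE
            rw [hPV z hzW]; exact hzp
          · have hzW : z ∈ W₂ := (le_iSup_of_le i (le_iSup (fun _ => T.maxGenEigenspace (ξ i)) hik) : T.maxGenEigenspace (ξ i) ≤ W₂) hzE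
            rw [hPW₂ z hzW]; exact Submodule.zero_mem p
        · push_neg at hμ
          rw [h_not_eig μ hμ] at hzE
          rw [Submodule.mem_bot ℂ |>.mp hzE, Matrix.mulVec_zero]
          exact Submodule.zero_mem p
      exact fun z hz => hle hz
    rintro y ⟨z, hz, rfl⟩
    rw [hHh_apply z]
    exact Submodule.add_mem p (hmapsT z hz)
      (Submodule.smul_mem p s (hmapsT _ (hPp z hz)))
  refine ⟨parta, ?_⟩
  -- Part (b)
  have hHhW₁ : ∀ x ∈ W₁, Matrix.toLin' (H * (1 + s • P)) x ∈ W₁ := by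
    intro x hx
    rw [hHh_apply x, hPV x hx]
    exact Submodule.add_mem _ (hTW₁ x hx) (Submodule.smul_mem _ s (hTW₁ x hx))
  have hHhW₂ : ∀ x ∈ W₂, Matrix.toLin' (H * (1 + s • P)) x ∈ W₂ := by
    intro x hx
    rw [hHh_apply x, hPW₂ x hx]
    simpa using hTW₂ x hx
  have hres₁ : (Matrix.toLin' (H * (1 + s • P))).restrict hHhW₁
      = (1 + s) • (T.restrict hTW₁) := by
    refine LinearMap.ext fun x => ?_
    apply Subtype.ext
    rw [LinearMap.restrict_apply]
    show Matrix.toLin' (H * (1 + s • P)) (x : Fin (n + m) → ℂ) = _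
    rw [hHh_apply, hPV _ x.2]
    have : ((1 + s) • (T.restrict hTW₁)) x = (1 + s) • ((T.restrict hTW₁) x) := rfl
    rw [this]
    show T (x : Fin (n + m) → ℂ) + s • T (x : Fin (n + m) → ℂ)
        = ((1 + s) • (T ((x : Fin (n + m) → ℂ)) : Fin (n + m) → ℂ))
    rw [add_smul, one_smul]
  have hres₂ : (Matrix.toLin' (H * (1 + s • P))).restrict hHhW₂ = T.restrict hTW₂ := by
    refine LinearMap.ext fun x => ?_
    apply Subtype.ext
    rw [LinearMap.restrict_apply, LinearMap.restrict_apply]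
    show Matrix.toLin' (H * (1 + s • P)) (x : Fin (n + m) → ℂ) = T (x : Fin (n + m) → ℂ)
    rw [hHh_apply, hPW₂ _ x.2]
    simp
  -- characteristic polynomials of restrictions of T
  set c₁ := (T.restrict hTW₁).charpoly with hc₁def
  set c₂ := (T.restrict hTW₂).charpoly with hc₂def
  have hcsplit : T.charpoly = c₁ * c₂ := charpoly_eq_restrict_mul T hcompl hTW₁ hTW₂
  have hTcp : T.charpoly = ∏ i, (X - C (ξ i)) := by rw [hT, _root_.charpoly_toLin', hchar]
  -- roots of the factors
  have hroot₁ : ∀ μ ∈ c₁.roots, μ ∈ S₁f := by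
    intro μ hμ
    have hisr : c₁.IsRoot μ := Polynomial.isRoot_of_mem_roots hμ
    have heig := hasEigenvalue_of_isRoot_charpoly _ hisr
    obtain ⟨v, hvmem, hv0⟩ := heig.exists_hasEigenvector
    have hvE : (v : Fin (n + m) → ℂ) ∈ T.maxGenEigenspace μ := by
      rw [Module.End.mem_maxGenEigenspace]
      refine ⟨1, ?_⟩
      have : T (v : Fin (n + m) → ℂ) = μ • (v : Fin (n + m) → ℂ) := by
        have h7 := Module.End.mem_eigenspace_iff.mp hvmem
        have := congrArg Subtype.val h7
        simpa [LinearMap.restrict_apply] using this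
      rw [pow_one, LinearMap.sub_apply, this, LinearMap.smul_apply, Module.End.one_apply, sub_self]
    by_contra hnot
    have hdisjE : Disjoint (T.maxGenEigenspace μ) W₁ := by
      rw [hW₁S]
      exact (Module.End.independent_maxGenEigenspace T).disjoint_biSup
        (by simpa using hnot)
    have : (v : Fin (n + m) → ℂ) = 0 := by
      have := hdisjE.le_bot (Submodule.mem_inf.mpr ⟨hvE, v.2⟩)
      simpa using this
    exact hv0 (Subtype.ext this)
  have hroot₂ : ∀ μ ∈ c₂.roots, μ ∈ S₂f := by
    intro μ hμ
    have hisr : c₂.IsRoot μ := Polynomial.isRoot_of_mem_roots hμ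
    have heig := hasEigenvalue_of_isRoot_charpoly _ hisr
    obtain ⟨v, hvmem, hv0⟩ := heig.exists_hasEigenvector
    have hvE : (v : Fin (n + m) → ℂ) ∈ T.maxGenEigenspace μ := by
      rw [Module.End.mem_maxGenEigenspace]
      refine ⟨1, ?_⟩
      have : T (v : Fin (n + m) → ℂ) = μ • (v : Fin (n + m) → ℂ) := by
        have h7 := Module.End.mem_eigenspace_iff.mp hvmem
        have := congrArg Subtype.val h7
        simpa [LinearMap.restrict_apply] using this
      rw [pow_one, LinearMap.sub_apply, this, LinearMap.smul_apply, Module.End.one_apply, sub_self]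
    by_contra hnot
    have hdisjE : Disjoint (T.maxGenEigenspace μ) W₂ := by
      rw [hW₂S]
      exact (Module.End.independent_maxGenEigenspace T).disjoint_biSup
        (by simpa using hnot)
    have : (v : Fin (n + m) → ℂ) = 0 := by
      have := hdisjE.le_bot (Submodule.mem_inf.mpr ⟨hvE, v.2⟩)
      simpa using this
    exact hv0 (Subtype.ext this)
  -- multiset identification of the roots
  have hmono₁ : c₁.Monic := LinearMap.charpoly_monic _
  have hmono₂ : c₂.Monic := LinearMap.charpoly_monic _
  have hne12 : c₁ * c₂ ≠ 0 := (hmono₁.mul hmono₂).ne_zero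
  have hrootsum : (Multiset.map ξ Finset.univ.val) = c₁.roots + c₂.roots := by
    have h8 : (∏ i, (X - C (ξ i))).roots = Multiset.map ξ Finset.univ.val := by
      rw [Finset.prod_eq_multiset_prod]
      rw [show Multiset.map (fun i => X - C (ξ i)) Finset.univ.val
          = Multiset.map (fun a => X - C a) (Multiset.map ξ Finset.univ.val) by
        rw [Multiset.map_map]; simp [Function.comp]]
      exact Polynomial.roots_multiset_prod_X_sub_C _
    rw [← h8, ← hTcp, hcsplit, Polynomial.roots_mul hne12]
  have hpredξ : ∀ i : Fin (n + m), (ξ i ∈ S₁f) ↔ (i : ℕ) < k := by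
    intro i
    constructor
    · intro hmem
      obtain ⟨i₀, hi₀, hξ⟩ := hS₁mem.mp hmem
      by_contra hik
      exact hdisj i₀ i hi₀ (not_lt.mp hik) hξ
    · intro hik
      exact hS₁mem.mpr ⟨i, hik, rfl⟩
  have hfiltermap : (Multiset.map ξ Finset.univ.val).filter (· ∈ S₁f)
      = Multiset.map ξ (Finset.univ.val.filter fun i : Fin (n + m) => (i : ℕ) < k) := by
    rw [Multiset.filter_map]
    congr 1
    refine Multiset.filter_congr fun i _ => ?_
    simpa using hpredξ i
  have hR₁ : c₁.roots = Multiset.map ξ (Finset.univ.val.filter fun i : Fin (n + m) => (i : ℕ) < k) := by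
    rw [← hfiltermap, hrootsum, Multiset.filter_add,
      Multiset.filter_eq_self.mpr hroot₁,
      Multiset.filter_eq_nil.mpr (fun a ha hmem => hS₁S₂ a hmem (hroot₂ a ha)), add_zero]
  have hR₂ : c₂.roots = Multiset.map ξ (Finset.univ.val.filter fun i : Fin (n + m) => ¬ (i : ℕ) < k) := by
    have hsplitval : (Finset.univ.val.filter fun i : Fin (n + m) => (i : ℕ) < k)
        + (Finset.univ.val.filter fun i : Fin (n + m) => ¬ (i : ℕ) < k) = Finset.univ.val :=
      Multiset.filter_add_not _ _
    have h9 : Multiset.map ξ Finset.univ.val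
        = c₁.roots + Multiset.map ξ (Finset.univ.val.filter fun i : Fin (n + m) => ¬ (i : ℕ) < k) := by
      rw [hR₁, ← Multiset.map_add, hsplitval]
    exact add_left_cancel (hrootsum.symm.trans h9)
  have hc₁eq : c₁ = ∏ i ∈ Finset.univ.filter (fun i : Fin (n + m) => (i : ℕ) < k), (X - C (ξ i)) := by
    rw [(IsAlgClosed.splits c₁).eq_prod_roots_of_monic hmono₁, hR₁]
    rw [Finset.prod_eq_multiset_prod, Finset.filter_val, Multiset.map_map]
    rfl
  have hc₂eq : c₂ = ∏ i ∈ Finset.univ.filter (fun i : Fin (n + m) => ¬ (i : ℕ) < k), (X - C (ξ i)) := by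
    rw [(IsAlgClosed.splits c₂).eq_prod_roots_of_monic hmono₂, hR₂]
    rw [Finset.prod_eq_multiset_prod, Finset.filter_val, Multiset.map_map]
    rfl
  -- charpoly of the scaled restriction
  have hch₁ : ((1 + s) • (T.restrict hTW₁)).charpoly
      = ∏ i ∈ Finset.univ.filter (fun i : Fin (n + m) => (i : ℕ) < k), (X - C ((1 + s) * ξ i)) := by
    set b := Module.finBasis ℂ W₁
    rw [← LinearMap.charpoly_toMatrix ((1 + s) • (T.restrict hTW₁)) b]
    rw [LinearEquiv.map_smul]
    refine charpoly_smul_matrix _ _ _ _ ?_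
    rw [LinearMap.charpoly_toMatrix, ← hc₁def, hc₁eq]
  -- final computation
  have hfinal : (H * (1 + s • P)).charpoly
      = ∏ i : Fin (n + m), (X - C (if (i : ℕ) < k then (1 + s) * ξ i else ξ i)) := by
    rw [← _root_.charpoly_toLin' (H * (1 + s • P))]
    rw [charpoly_eq_restrict_mul (Matrix.toLin' (H * (1 + s • P))) hcompl hHhW₁ hHhW₂]
    rw [hres₁, hres₂, hch₁, ← hc₂def, hc₂eq]
    rw [← Finset.prod_filter_mul_prod_filter_not Finset.univ (fun i : Fin (n + m) => (i : ℕ) < k)]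
    congr 1
    · refine Finset.prod_congr rfl fun i hi => ?_
      rw [if_pos (Finset.mem_filter.mp hi).2]
    · refine Finset.prod_congr rfl fun i hi => ?_
      rw [if_neg (Finset.mem_filter.mp hi).2]
  exact hfinal
end

section
/- Let U and V be matrices with orthonormal columns spanning, respectively, the left and right invariant subspaces of a matrix H for the same set of eigenvalues, where in a suitable orthonormal basis V = [I; 0] and H = [[A₁₁, A₁₂],[0, A₂₂]] with σ(A₁₁) ∩ σ(A₂₂) = ∅. If Z solves A₁₁Z − ZA₂₂ = −A₁₂, then ‖(U*V)⁻¹‖ = ‖(I + ZZ*)^{1/2}‖ = (‖I‖² + ‖Z‖²)^{1/2}, and consequently ‖(U*V)⁻¹‖₂ ≤ 1 + ‖A₁₂‖/sep(A₁₁, A₂₂). -/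
open Matrix ComplexOrder Polynomial
open scoped Matrix.Norms.L2Operator

/-- The separation of `M` and `N` in the spectral norm. -/
noncomputable def sepS {k l : ℕ} (M : Matrix (Fin k) (Fin k) ℂ)
    (N : Matrix (Fin l) (Fin l) ℂ) : ℝ :=
  sInf ((fun X : Matrix (Fin k) (Fin l) ℂ => specNorm (M * X - X * N) / specNorm X)
    '' {X | X ≠ 0})

namespace CondAux

variable {k l : ℕ}

lemma norm_one_le : ‖(1 : Matrix (Fin k) (Fin k) ℂ)‖ ≤ 1 := by
  rw [Matrix.cstar_norm_def, _root_.map_one]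
  exact ContinuousLinearMap.norm_id_le

lemma norm_diagonal_le (d : Fin k → ℂ) (M : ℝ) (hM : 0 ≤ M) (h : ∀ i, ‖d i‖ ≤ M) :
    ‖(diagonal d : Matrix (Fin k) (Fin k) ℂ)‖ ≤ M := by
  rw [Matrix.l2_opNorm_def]
  refine ContinuousLinearMap.opNorm_le_bound _ hM fun x => ?_
  show ‖Matrix.toEuclideanLin (diagonal d) x‖ ≤ M * ‖x‖
  rw [Matrix.toEuclideanLin_apply]
  rw [EuclideanSpace.norm_eq, EuclideanSpace.norm_eq]
  have hle : ∑ i, ‖(diagonal d *ᵥ (WithLp.equiv 2 (Fin k → ℂ)) x) i‖ ^ 2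
      ≤ M ^ 2 * ∑ i, ‖(WithLp.equiv 2 (Fin k → ℂ)) x i‖ ^ 2 := by
    rw [Finset.mul_sum]
    refine Finset.sum_le_sum fun i _ => ?_
    rw [Matrix.mulVec_diagonal, norm_mul, mul_pow]
    have := h i
    have h2 : ‖d i‖ ^ 2 ≤ M ^ 2 := by nlinarith [norm_nonneg (d i)]
    nlinarith [norm_nonneg ((WithLp.equiv 2 (Fin k → ℂ)) x i), sq_nonneg (‖(WithLp.equiv 2 (Fin k → ℂ)) x i‖)]
  calc Real.sqrt (∑ i, ‖(WithLp.equiv 2 (Fin k → ℂ)).symm (diagonal d *ᵥ (WithLp.equiv 2 (Fin k → ℂ)) x) i‖ ^ 2)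
      = Real.sqrt (∑ i, ‖(diagonal d *ᵥ (WithLp.equiv 2 (Fin k → ℂ)) x) i‖ ^ 2) := rfl
    _ ≤ Real.sqrt (M ^ 2 * ∑ i, ‖(WithLp.equiv 2 (Fin k → ℂ)) x i‖ ^ 2) := Real.sqrt_le_sqrt hle
    _ = M * Real.sqrt (∑ i, ‖(WithLp.equiv 2 (Fin k → ℂ)) x i‖ ^ 2) := by
        rw [Real.sqrt_mul (sq_nonneg M), Real.sqrt_sq hM]

lemma le_norm_diagonal (d : Fin k → ℂ) (i : Fin k) :
    ‖d i‖ ≤ ‖(diagonal d : Matrix (Fin k) (Fin k) ℂ)‖ := by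
  have := Matrix.l2_opNorm_mulVec (diagonal d) (EuclideanSpace.single i (1 : ℂ))
  rw [EuclideanSpace.norm_single] at this
  have he : ((EuclideanSpace.equiv (Fin k) ℂ).symm <|
      diagonal d *ᵥ (EuclideanSpace.single i (1 : ℂ))) = EuclideanSpace.single i (d i) := by
    show (WithLp.equiv 2 (Fin k → ℂ)).symm _ = _
    have : (diagonal d *ᵥ ((EuclideanSpace.single i (1 : ℂ)) : Fin k → ℂ)) = Pi.single i (d i) := by
      have : ((EuclideanSpace.single i (1 : ℂ)) : Fin k → ℂ) = Pi.single i 1 := rfl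
      rw [this, Matrix.diagonal_mulVec_single, mul_one]
    rw [this]; rfl
  rw [he, EuclideanSpace.norm_single, norm_one, mul_one] at this
  exact this

lemma norm_mul_unitary (A Q : Matrix (Fin k) (Fin k) ℂ) (hQ : Qᴴ * Q = 1) : ‖A * Q‖ = ‖A‖ := by
  have hQ' : Q * Qᴴ = 1 := mul_eq_one_comm.mp hQ
  have h1 : ‖Q‖ ≤ 1 := by
    have h2 : ‖Q‖ * ‖Q‖ ≤ 1 := by
      rw [← Matrix.l2_opNorm_conjTranspose_mul_self, hQ]; exact norm_one_le
    nlinarith [norm_nonneg Q]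
  have h1' : ‖Qᴴ‖ ≤ 1 := by rw [Matrix.l2_opNorm_conjTranspose]; exact h1
  refine le_antisymm ?_ ?_
  · calc ‖A * Q‖ ≤ ‖A‖ * ‖Q‖ := Matrix.l2_opNorm_mul A Q
      _ ≤ ‖A‖ * 1 := by nlinarith [norm_nonneg A, norm_nonneg (A * Q)]
      _ = ‖A‖ := mul_one _
  · calc ‖A‖ = ‖A * Q * Qᴴ‖ := by rw [mul_assoc, hQ', mul_one]
      _ ≤ ‖A * Q‖ * ‖Qᴴ‖ := Matrix.l2_opNorm_mul _ _
      _ ≤ ‖A * Q‖ := by nlinarith [norm_nonneg (A * Q), norm_nonneg (A * Q * Qᴴ)]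

lemma norm_unitary_mul (Q A : Matrix (Fin k) (Fin k) ℂ) (hQ : Qᴴ * Q = 1) : ‖Q * A‖ = ‖A‖ := by
  rw [← Matrix.l2_opNorm_conjTranspose (Q * A), Matrix.conjTranspose_mul,
    norm_mul_unitary _ _ (by rw [Matrix.conjTranspose_conjTranspose, mul_eq_one_comm.mp hQ]),
    Matrix.l2_opNorm_conjTranspose]



lemma norm_one_add_posSemidef (hk : 0 < k) (P : Matrix (Fin k) (Fin k) ℂ) (hP : P.PosSemidef) :
    ‖1 + P‖ = 1 + ‖P‖ := by
  have : Nonempty (Fin k) := ⟨⟨0, hk⟩⟩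
  have hH : P.IsHermitian := hP.1
  obtain ⟨i0, hi0⟩ := Finite.exists_max hH.eigenvalues
  set U : Matrix (Fin k) (Fin k) ℂ := (hH.eigenvectorUnitary : Matrix (Fin k) (Fin k) ℂ) with hU
  have h1 : star U * U = 1 := Unitary.coe_star_mul_self hH.eigenvectorUnitary
  have h1' : Uᴴ * U = 1 := h1
  have h1'' : (Uᴴ)ᴴ * Uᴴ = 1 := by
    rw [Matrix.conjTranspose_conjTranspose]
    exact mul_eq_one_comm.mp h1'
  have key : Uᴴ * P * U = diagonal (RCLike.ofReal ∘ hH.eigenvalues) :=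
    by rw [← hH.conjStarAlgAut_star_eigenvectorUnitary, Unitary.conjStarAlgAut_star_apply]; rfl
  have hnorm : ∀ B : Matrix (Fin k) (Fin k) ℂ, ‖Uᴴ * B * U‖ = ‖B‖ := fun B => by
    rw [Matrix.mul_assoc, norm_unitary_mul _ _ h1'', norm_mul_unitary _ _ h1']
  have hdiagnorm : ∀ d : Fin k → ℝ, (∀ i, 0 ≤ d i) → (∀ i, d i ≤ d i0) →
      ‖(diagonal (fun i => (d i : ℂ)) : Matrix (Fin k) (Fin k) ℂ)‖ = d i0 := by
    intro d h0 hle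
    refine le_antisymm (norm_diagonal_le _ _ (h0 i0) fun i => ?_) ?_
    · rw [Complex.norm_real, Real.norm_of_nonneg (h0 i)]; exact hle i
    · have := le_norm_diagonal (fun i => (d i : ℂ)) i0
      rwa [Complex.norm_real, Real.norm_of_nonneg (h0 i0)] at this
  have hP0 : ∀ i, 0 ≤ hH.eigenvalues i := fun i => hP.eigenvalues_nonneg i
  have hPn : ‖P‖ = hH.eigenvalues i0 := by
    rw [← hnorm P, key]
    exact hdiagnorm _ hP0 hi0
  have key2 : Uᴴ * (1 + P) * U = diagonal (fun i => ((1 + hH.eigenvalues i : ℝ) : ℂ)) := by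
    rw [Matrix.mul_add, Matrix.mul_one, Matrix.add_mul, h1', key]
    rw [← Matrix.diagonal_one, Matrix.diagonal_add]
    congr 1
    funext i
    push_cast
    simp
  have : ‖1 + P‖ = 1 + hH.eigenvalues i0 := by
    rw [← hnorm (1 + P), key2]
    exact hdiagnorm _ (fun i => by linarith [hP0 i]) (fun i => by linarith [hi0 i])
  rw [this, hPn]


end CondAux


namespace CondAux

variable {n m : ℕ}

lemma toLin'_pow {p : Type*} [Fintype p] [DecidableEq p] (N : Matrix p p ℂ) (c : ℕ) :
    (Matrix.toLin' N) ^ c = Matrix.toLin' (N ^ c) := by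
  induction c with
  | zero => simp [Matrix.toLin'_one]; rfl
  | succ c ih =>
    rw [pow_succ, pow_succ, ih, Matrix.toLin'_mul]
    rfl

lemma blockdiag_pow (X : Matrix (Fin n) (Fin n) ℂ) (Y : Matrix (Fin m) (Fin m) ℂ) (c : ℕ) :
    (fromBlocks X 0 0 Y) ^ c = fromBlocks (X ^ c) 0 0 (Y ^ c) := by
  induction c with
  | zero => simp [pow_zero, Matrix.fromBlocks_one]
  | succ c ih => rw [pow_succ, pow_succ, ih, Matrix.fromBlocks_multiply]; simp [pow_succ]

lemma mulVec_eq_zero_of_isUnit {p : Type*} [Fintype p] [DecidableEq p] {M : Matrix p p ℂ}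
    (h : IsUnit M) {x : p → ℂ} (hx : M *ᵥ x = 0) : x = 0 := by
  have hd : IsUnit M.det := (Matrix.isUnit_iff_isUnit_det M).mp h
  calc x = (M⁻¹ * M) *ᵥ x := by rw [Matrix.nonsing_inv_mul M hd, Matrix.one_mulVec]
    _ = M⁻¹ *ᵥ (M *ᵥ x) := by rw [Matrix.mulVec_mulVec]
    _ = 0 := by rw [hx, Matrix.mulVec_zero]

end CondAux

namespace CondAux

variable {n m : ℕ}

/-- The invariant subspace is contained in the kernel of `v ↦ Zᴴ (v∘inl) + v∘inr`. -/
lemma gen_le_ker (A₁₁ : Matrix (Fin n) (Fin n) ℂ) (A₁₂ : Matrix (Fin n) (Fin m) ℂ)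
    (A₂₂ : Matrix (Fin m) (Fin m) ℂ)
    (hdisj : spectrum ℂ A₁₁ ∩ spectrum ℂ A₂₂ = ∅)
    (H : Matrix (Fin n ⊕ Fin m) (Fin n ⊕ Fin m) ℂ)
    (hH : H = Matrix.fromBlocks A₁₁ A₁₂ 0 A₂₂)
    (Z : Matrix (Fin n) (Fin m) ℂ) (hZ : A₁₁ * Z - Z * A₂₂ = -A₁₂) :
    (⨆ μ ∈ spectrum ℂ A₁₁,
        Module.End.maxGenEigenspace (Matrix.toLin' Hᴴ) (starRingEnd ℂ μ)) ≤
      LinearMap.ker ((Matrix.toLin' Zᴴ).comp (LinearMap.funLeft ℂ ℂ Sum.inl)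
        + LinearMap.funLeft ℂ ℂ Sum.inr) := by
  refine iSup₂_le fun μ hμ v hv => ?_
  rw [Module.End.mem_maxGenEigenspace] at hv
  obtain ⟨c, hc⟩ := hv
  set ν : ℂ := starRingEnd ℂ μ with hν
  -- convert to matrix statement
  have hend : (Matrix.toLin' Hᴴ - ν • (1 : Module.End ℂ (Fin n ⊕ Fin m → ℂ)))
      = Matrix.toLin' (Hᴴ - ν • 1) := by
    apply LinearMap.ext; intro w
    rw [LinearMap.sub_apply, LinearMap.smul_apply, Module.End.one_apply, Matrix.toLin'_apply,
      Matrix.toLin'_apply, Matrix.sub_mulVec, Matrix.smul_mulVec, Matrix.one_mulVec]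
  rw [hend, toLin'_pow] at hc
  have hc' : (Hᴴ - ν • 1) ^ c *ᵥ v = 0 := by
    rw [← Matrix.toLin'_apply]; exact hc
  -- block structure
  set W : Matrix (Fin n ⊕ Fin m) (Fin n ⊕ Fin m) ℂ := fromBlocks 1 0 (-Zᴴ) 1 with hW
  set W' : Matrix (Fin n ⊕ Fin m) (Fin n ⊕ Fin m) ℂ := fromBlocks 1 0 Zᴴ 1 with hW'
  have hWW' : W * W' = 1 := by
    rw [hW, hW', Matrix.fromBlocks_multiply, ← Matrix.fromBlocks_one]
    congr 1 <;> simp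
  have hW'W : W' * W = 1 := mul_eq_one_comm.mp hWW'
  set D : Matrix (Fin n ⊕ Fin m) (Fin n ⊕ Fin m) ℂ := fromBlocks A₁₁ᴴ 0 0 A₂₂ᴴ with hD
  have hA12 : A₁₂ᴴ = A₂₂ᴴ * Zᴴ - Zᴴ * A₁₁ᴴ := by
    have h0 : A₁₂ = Z * A₂₂ - A₁₁ * Z := by rw [← neg_neg A₁₂, ← hZ, neg_sub]
    rw [h0, Matrix.conjTranspose_sub, Matrix.conjTranspose_mul, Matrix.conjTranspose_mul]
  have hHW : Hᴴ * W = W * D := by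
    rw [hH, Matrix.fromBlocks_conjTranspose, hW, hD, Matrix.fromBlocks_multiply,
      Matrix.fromBlocks_multiply]
    congr 1 <;> simp [hA12] <;> try ring_nf
    · simp [sub_eq_add_neg, Matrix.mul_sub]
  -- powers commute past W
  have hstep : (Hᴴ - ν • 1) * W = W * (D - ν • 1) := by
    rw [Matrix.sub_mul, Matrix.mul_sub, hHW, Matrix.smul_mul, Matrix.mul_smul,
      Matrix.one_mul, Matrix.mul_one]
  have hpowW : ∀ c : ℕ, (Hᴴ - ν • 1) ^ c * W = W * (D - ν • 1) ^ c := by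
    intro c
    induction c with
    | zero => rw [pow_zero, pow_zero, Matrix.one_mul, Matrix.mul_one]
    | succ c ih =>
      rw [pow_succ, pow_succ, Matrix.mul_assoc, hstep, ← Matrix.mul_assoc, ih,
        Matrix.mul_assoc]
  -- block diagonal decomposition of (D - ν•1)^c
  have hDblock : D - ν • 1 = fromBlocks (A₁₁ᴴ - ν • 1) 0 0 (A₂₂ᴴ - ν • 1) := by
    rw [hD, ← Matrix.fromBlocks_one, Matrix.fromBlocks_smul, sub_eq_add_neg,
      Matrix.fromBlocks_neg, Matrix.fromBlocks_add]
    simp [sub_eq_add_neg]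
  have hDpow : (D - ν • 1) ^ c = fromBlocks ((A₁₁ᴴ - ν • 1) ^ c) 0 0 ((A₂₂ᴴ - ν • 1) ^ c) := by
    rw [hDblock, blockdiag_pow]
  -- transfer the annihilation
  set u : Fin n ⊕ Fin m → ℂ := W' *ᵥ v with hu
  have hu2 : (D - ν • 1) ^ c *ᵥ u = 0 := by
    have h5 : ((Hᴴ - ν • 1) ^ c * W) *ᵥ u = 0 := by
      rw [hu, Matrix.mulVec_mulVec, Matrix.mul_assoc, hWW', Matrix.mul_one]
      exact hc'
    rw [hpowW] at h5
    have h6 := congrArg (fun y => W' *ᵥ y) h5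
    simpa [Matrix.mulVec_mulVec, ← Matrix.mul_assoc, hW'W, Matrix.one_mul,
      Matrix.mulVec_zero] using h6
  have hbot : (A₂₂ᴴ - ν • 1) ^ c *ᵥ (u ∘ Sum.inr) = 0 := by
    funext i
    have := congrFun hu2 (Sum.inr i)
    rw [hDpow, Matrix.fromBlocks_mulVec] at this
    simpa using this
  -- invertibility
  have hμ2 : μ ∉ spectrum ℂ A₂₂ := by
    intro hmem
    have : μ ∈ spectrum ℂ A₁₁ ∩ spectrum ℂ A₂₂ := ⟨hμ, hmem⟩
    rw [hdisj] at this
    exact this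
  have hunit : IsUnit (A₂₂ᴴ - ν • 1) := by
    have h7 : IsUnit (algebraMap ℂ (Matrix (Fin m) (Fin m) ℂ) μ - A₂₂) :=
      spectrum.notMem_iff.mp hμ2
    have h8 : IsUnit ((algebraMap ℂ (Matrix (Fin m) (Fin m) ℂ) μ - A₂₂)ᴴ) := by
      rw [Matrix.isUnit_iff_isUnit_det, Matrix.det_conjTranspose, isUnit_star,
        ← Matrix.isUnit_iff_isUnit_det]
      exact h7
    have h9 : (algebraMap ℂ (Matrix (Fin m) (Fin m) ℂ) μ - A₂₂)ᴴ = ν • 1 - A₂₂ᴴ := by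
      rw [Matrix.conjTranspose_sub, Algebra.algebraMap_eq_smul_one, Matrix.conjTranspose_smul,
        Matrix.conjTranspose_one]
      rfl
    rw [h9] at h8
    have := h8.neg
    rwa [neg_sub] at this
  have hzero : u ∘ Sum.inr = 0 := mulVec_eq_zero_of_isUnit (hunit.pow c) hbot
  -- conclude
  rw [LinearMap.mem_ker]
  have hform : ∀ i : Fin m, (Zᴴ *ᵥ (v ∘ Sum.inl)) i + v (Sum.inr i) = 0 := by
    intro i
    have := congrFun hzero i
    rw [hu, hW'] at this
    rw [Matrix.fromBlocks_mulVec] at this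
    simpa using this
  funext i
  exact hform i

end CondAux



namespace CondAux

variable {n m : ℕ}

lemma eval_charpoly' {k : ℕ} (B : Matrix (Fin k) (Fin k) ℂ) (r : ℂ) :
    B.charpoly.eval r = (r • (1 : Matrix (Fin k) (Fin k) ℂ) - B).det := by
  rw [Matrix.charpoly, _root_.eval_det, matPolyEquiv_charmatrix]
  congr 1
  rw [Polynomial.eval_sub, Polynomial.eval_X, Polynomial.eval_C]
  congr 1
  ext i j
  simp [Matrix.scalar, Matrix.diagonal, Matrix.one_apply]

/-- The Sylvester operator as a linear map. -/
noncomputable def sylvMap (A : Matrix (Fin n) (Fin n) ℂ) (B : Matrix (Fin m) (Fin m) ℂ) :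
    Matrix (Fin n) (Fin m) ℂ →ₗ[ℂ] Matrix (Fin n) (Fin m) ℂ where
  toFun X := A * X - X * B
  map_add' X Y := by
    simp only [Matrix.mul_add, Matrix.add_mul]; abel
  map_smul' r X := by
    simp only [RingHom.id_apply, Matrix.mul_smul, Matrix.smul_mul, smul_sub]

lemma sylv_ker (A₁₁ : Matrix (Fin n) (Fin n) ℂ) (A₂₂ : Matrix (Fin m) (Fin m) ℂ)
    (hdisj : spectrum ℂ A₁₁ ∩ spectrum ℂ A₂₂ = ∅)
    (X : Matrix (Fin n) (Fin m) ℂ) (hX : A₁₁ * X - X * A₂₂ = 0) : X = 0 := by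
  have hcomm : A₁₁ * X = X * A₂₂ := sub_eq_zero.mp hX
  have hpow : ∀ c : ℕ, A₁₁ ^ c * X = X * A₂₂ ^ c := by
    intro c
    induction c with
    | zero => rw [pow_zero, pow_zero, Matrix.one_mul, Matrix.mul_one]
    | succ c ih =>
      calc A₁₁ ^ (c + 1) * X = A₁₁ ^ c * (A₁₁ * X) := by rw [pow_succ, Matrix.mul_assoc]
        _ = (A₁₁ ^ c * X) * A₂₂ := by rw [hcomm, Matrix.mul_assoc]
        _ = X * (A₂₂ ^ c * A₂₂) := by rw [ih, Matrix.mul_assoc]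
        _ = X * A₂₂ ^ (c + 1) := by rw [← pow_succ]
  have hpoly : ∀ p : ℂ[X], (aeval A₁₁ p) * X = X * (aeval A₂₂ p) := by
    intro p
    induction p using Polynomial.induction_on' with
    | add p q hp hq => rw [map_add, map_add, Matrix.add_mul, Matrix.mul_add, hp, hq]
    | monomial k a =>
      simp only [aeval_monomial, Algebra.algebraMap_eq_smul_one, Matrix.smul_mul,
        Matrix.mul_smul, Matrix.one_mul, Matrix.mul_one, hpow]
  by_contra hXne
  set p := Matrix.charpoly A₂₂ with hp
  have h0 : (aeval A₁₁ p) * X = 0 := by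
    rw [hpoly, Matrix.aeval_self_charpoly, Matrix.mul_zero]
  have hnu : ¬ IsUnit (aeval A₁₁ p) := by
    intro hu
    obtain ⟨u, hu⟩ := hu
    apply hXne
    calc X = ((↑u⁻¹ * ↑u : Matrix (Fin n) (Fin n) ℂ)) * X := by
          rw [Units.inv_mul, Matrix.one_mul]
      _ = (↑u⁻¹ : Matrix (Fin n) (Fin n) ℂ) * ((aeval A₁₁ p) * X) := by
          rw [← hu, Matrix.mul_assoc]
      _ = 0 := by rw [h0, Matrix.mul_zero]
  have hmonic : p.Monic := Matrix.charpoly_monic A₂₂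
  have hsplits : p.Splits := IsAlgClosed.splits p
  have hfact : p = (p.roots.map fun r => Polynomial.X - Polynomial.C r).prod :=
    hsplits.eq_prod_roots_of_monic hmonic
  have hdet0 : (aeval A₁₁ p).det = 0 := by
    by_contra hd
    exact hnu ((Matrix.isUnit_iff_isUnit_det _).mpr (isUnit_iff_ne_zero.mpr hd))
  set φ : ℂ[X] →* ℂ :=
    Matrix.detMonoidHom.comp (aeval A₁₁ : ℂ[X] →ₐ[ℂ] Matrix (Fin n) (Fin n) ℂ).toRingHom.toMonoidHom
    with hφ
  have hφeval : ∀ q : ℂ[X], φ q = (aeval A₁₁ q).det := fun q => rfl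
  have hdetprod : (p.roots.map fun r => (A₁₁ - r • 1).det).prod = 0 := by
    have h1 : φ p = 0 := by rw [hφeval]; exact hdet0
    have h2 : φ p = (p.roots.map fun r => (A₁₁ - r • 1).det).prod := by
      conv_lhs => rw [hfact]
      rw [map_multiset_prod, Multiset.map_map]
      congr 1
      apply Multiset.map_congr rfl
      intro r _
      rw [Function.comp_apply, hφeval, map_sub, aeval_X, aeval_C,
        Algebra.algebraMap_eq_smul_one]
    rw [← h2, h1]
  have hd := Multiset.prod_eq_zero_iff.mp hdetprod
  obtain ⟨r, hr, hrd⟩ := Multiset.mem_map.mp hd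
  have hdet : (A₁₁ - r • 1).det = 0 := hrd
  have hr1 : r ∈ spectrum ℂ A₁₁ := by
    rw [spectrum.mem_iff]
    intro hu
    rw [Matrix.isUnit_iff_isUnit_det, isUnit_iff_ne_zero] at hu
    apply hu
    have : algebraMap ℂ (Matrix (Fin n) (Fin n) ℂ) r - A₁₁ = -(A₁₁ - r • 1) := by
      rw [Algebra.algebraMap_eq_smul_one, neg_sub]
    rw [this, Matrix.det_neg, hdet, mul_zero]
  have hr2 : r ∈ spectrum ℂ A₂₂ := by
    rw [spectrum.mem_iff]
    intro hu
    rw [Matrix.isUnit_iff_isUnit_det, isUnit_iff_ne_zero] at hu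
    apply hu
    have hroot : p.eval r = 0 := by
      have : r ∈ p.roots := hr
      exact (Polynomial.isRoot_of_mem_roots this)
    rw [Algebra.algebraMap_eq_smul_one, ← eval_charpoly', hroot]
  have : r ∈ spectrum ℂ A₁₁ ∩ spectrum ℂ A₂₂ := ⟨hr1, hr2⟩
  rw [hdisj] at this
  exact this

end CondAux

namespace CondAux

variable {n m : ℕ}

lemma sep_lower (A₁₁ : Matrix (Fin n) (Fin n) ℂ) (A₂₂ : Matrix (Fin m) (Fin m) ℂ)
    (hdisj : spectrum ℂ A₁₁ ∩ spectrum ℂ A₂₂ = ∅)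
    {Z : Matrix (Fin n) (Fin m) ℂ} (hZ : Z ≠ 0) :
    ∃ s : ℝ, 0 < s ∧ ∀ X : Matrix (Fin n) (Fin m) ℂ, X ≠ 0 →
      s ≤ ‖A₁₁ * X - X * A₂₂‖ / ‖X‖ := by
  set T := sylvMap A₁₁ A₂₂ with hT
  have hTapp : ∀ X, T X = A₁₁ * X - X * A₂₂ := fun X => rfl
  have hinj : Function.Injective T := by
    rw [← LinearMap.ker_eq_bot, LinearMap.ker_eq_bot']
    intro X hX
    exact sylv_ker A₁₁ A₂₂ hdisj X (by rw [← hTapp]; exact hX)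
  have hsurj : Function.Surjective T := (LinearMap.injective_iff_surjective).mp hinj
  set e := LinearEquiv.ofBijective T ⟨hinj, hsurj⟩ with he
  set g := LinearMap.toContinuousLinearMap (e.symm.toLinearMap) with hg
  have hbound : ∀ X, ‖X‖ ≤ ‖g‖ * ‖T X‖ := by
    intro X
    have h1 : g (T X) = X := by
      show e.symm (T X) = X
      have h2 : T X = e X := rfl
      rw [h2, LinearEquiv.symm_apply_apply]
    calc ‖X‖ = ‖g (T X)‖ := by rw [h1]
      _ ≤ ‖g‖ * ‖T X‖ := g.le_opNorm _
  have hgpos : 0 < ‖g‖ := by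
    by_contra hc
    push_neg at hc
    have hg0 : ‖g‖ = 0 := le_antisymm hc (norm_nonneg g)
    have := hbound Z
    rw [hg0, zero_mul] at this
    exact hZ (norm_le_zero_iff.mp this)
  refine ⟨‖g‖⁻¹, inv_pos.mpr hgpos, fun X hX => ?_⟩
  have hXpos : 0 < ‖X‖ := norm_pos_iff.mpr hX
  rw [le_div_iff₀ hXpos]
  have h4 := hbound X
  have h5 : ‖g‖⁻¹ * ‖X‖ ≤ ‖g‖⁻¹ * (‖g‖ * ‖T X‖) :=
    mul_le_mul_of_nonneg_left h4 (inv_nonneg.mpr hgpos.le)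
  rw [← mul_assoc, inv_mul_cancel₀ (ne_of_gt hgpos), one_mul] at h5
  rw [hTapp] at h5
  exact h5

end CondAux

/-- Conditioning of `U* V`: if, in a suitable basis, `V = [I; 0]` and
`H = [[A₁₁, A₁₂],[0, A₂₂]]` with disjoint diagonal-block spectra, `Z` solves
`A₁₁ Z - Z A₂₂ = -A₁₂`, and `U` is an orthonormal basis of the left invariant subspace
of `H` for `σ(A₁₁)`, then `‖(U*V)⁻¹‖ = ‖(I + ZZ*)^{1/2}‖ = (‖I‖² + ‖Z‖²)^{1/2}` and
consequently `‖(U*V)⁻¹‖₂ ≤ 1 + ‖A₁₂‖ / sep(A₁₁, A₂₂)`. -/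
theorem cond_of_UstarV {n m : ℕ}
    (A₁₁ : Matrix (Fin n) (Fin n) ℂ) (A₁₂ : Matrix (Fin n) (Fin m) ℂ)
    (A₂₂ : Matrix (Fin m) (Fin m) ℂ)
    (hdisj : spectrum ℂ A₁₁ ∩ spectrum ℂ A₂₂ = ∅)
    (H : Matrix (Fin n ⊕ Fin m) (Fin n ⊕ Fin m) ℂ)
    (hH : H = Matrix.fromBlocks A₁₁ A₁₂ 0 A₂₂)
    (Z : Matrix (Fin n) (Fin m) ℂ) (hZ : A₁₁ * Z - Z * A₂₂ = -A₁₂)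
    (V : Matrix (Fin n ⊕ Fin m) (Fin n) ℂ)
    (hV : V = Matrix.fromRows (1 : Matrix (Fin n) (Fin n) ℂ) 0)
    (U : Matrix (Fin n ⊕ Fin m) (Fin n) ℂ) (hUo : Uᴴ * U = 1)
    (hUspan : Submodule.span ℂ (Set.range Uᵀ) =
      ⨆ μ ∈ spectrum ℂ A₁₁,
        Module.End.maxGenEigenspace (Matrix.toLin' Hᴴ) (starRingEnd ℂ μ))
    (S : Matrix (Fin n) (Fin n) ℂ) (hS : S.PosSemidef)
    (hSsq : S * S = 1 + Z * Zᴴ) :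
    specNorm ((Uᴴ * V)⁻¹) = specNorm S ∧
    specNorm S =
      Real.sqrt (specNorm (1 : Matrix (Fin n) (Fin n) ℂ) ^ 2 + specNorm Z ^ 2) ∧
    specNorm ((Uᴴ * V)⁻¹) ≤ 1 + specNorm A₁₂ / sepS A₁₁ A₂₂ := by
  classical
  -- specNorm coincides with the scoped L2 operator norm
  have hsn : ∀ {a b : Type} [Fintype a] [Fintype b] [DecidableEq b] (A : Matrix a b ℂ),
      specNorm A = ‖A‖ := fun A => rfl
  -- the two half blocks of U
  set U₁ : Matrix (Fin n) (Fin n) ℂ := Matrix.of fun i j => U (Sum.inl i) j with hU₁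
  set U₂ : Matrix (Fin m) (Fin n) ℂ := Matrix.of fun i j => U (Sum.inr i) j with hU₂def
  -- each column of U is in the kernel
  have hcol : ∀ j, ((Matrix.toLin' Zᴴ).comp (LinearMap.funLeft ℂ ℂ Sum.inl)
      + LinearMap.funLeft ℂ ℂ Sum.inr :
        (Fin n ⊕ Fin m → ℂ) →ₗ[ℂ] (Fin m → ℂ)) (fun i => U i j) = 0 := by
    intro j
    have hmem : (fun i => U i j) ∈ Submodule.span ℂ (Set.range Uᵀ) :=
      Submodule.subset_span ⟨j, rfl⟩
    rw [hUspan] at hmem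
    exact LinearMap.mem_ker.mp
      (CondAux.gen_le_ker A₁₁ A₁₂ A₂₂ hdisj H hH Z hZ hmem)
  have hU2 : U₂ = -(Zᴴ * U₁) := by
    have h : Zᴴ * U₁ + U₂ = 0 := by
      ext i j
      have h1 := congrFun (hcol j) i
      simp only [LinearMap.add_apply, LinearMap.comp_apply, LinearMap.funLeft_apply,
        Matrix.toLin'_apply, Pi.zero_apply] at h1
      simp only [hU₁, hU₂def]
      simpa [Matrix.add_apply, Matrix.mul_apply, Matrix.mulVec, dotProduct,
        Function.comp] using h1
    exact eq_neg_of_add_eq_zero_right h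
  -- U^H V = U₁^H
  have hUV : Uᴴ * V = U₁ᴴ := by
    ext i j
    rw [hV]
    simp only [Matrix.mul_apply, Fintype.sum_sum_type, Matrix.conjTranspose_apply]
    simp [Matrix.fromRows_apply_inl, Matrix.fromRows_apply_inr, Matrix.one_apply, hU₁, Finset.sum_ite_eq']
  -- orthonormality in block form
  have hUU : U₁ᴴ * U₁ + U₂ᴴ * U₂ = 1 := by
    rw [← hUo]
    ext i j
    simp only [Matrix.add_apply, Matrix.mul_apply, Fintype.sum_sum_type,
      Matrix.conjTranspose_apply, hU₁, hU₂def, Matrix.of_apply]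
  -- S and Q
  have hSH : Sᴴ = S := hS.1
  set Q : Matrix (Fin n) (Fin n) ℂ := S * U₁ with hQdef
  have hQ1 : Qᴴ * Q = 1 := by
    rw [hQdef, Matrix.conjTranspose_mul, hSH]
    calc U₁ᴴ * S * (S * U₁) = U₁ᴴ * (S * S) * U₁ := by
          rw [Matrix.mul_assoc, Matrix.mul_assoc, Matrix.mul_assoc]
      _ = U₁ᴴ * (1 + Z * Zᴴ) * U₁ := by rw [hSsq]
      _ = U₁ᴴ * U₁ + U₂ᴴ * U₂ := by
          rw [hU2]
          rw [Matrix.conjTranspose_neg, Matrix.conjTranspose_mul,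
            Matrix.conjTranspose_conjTranspose, Matrix.neg_mul, Matrix.mul_neg, neg_neg]
          rw [Matrix.mul_add, Matrix.add_mul, Matrix.mul_one]
          simp [Matrix.mul_assoc]
      _ = 1 := hUU
  have hQdet : IsUnit Q.det := by
    have h := congrArg Matrix.det hQ1
    rw [Matrix.det_mul, Matrix.det_one] at h
    exact isUnit_iff_ne_zero.mpr (right_ne_zero_of_mul (by rw [h]; exact one_ne_zero))
  have hdetSU : Q.det = S.det * U₁.det := by rw [hQdef, Matrix.det_mul]
  have hSdet : IsUnit S.det := by
    rw [isUnit_iff_ne_zero]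
    intro h0
    rw [hdetSU, h0, zero_mul] at hQdet
    exact (isUnit_iff_ne_zero.mp hQdet) rfl
  -- (U^H V)⁻¹ = S * Q
  have hU1inv : U₁⁻¹ = Qᴴ * S := by
    apply Matrix.inv_eq_left_inv
    rw [Matrix.mul_assoc, ← hQdef, hQ1]
  have hUVinv : (Uᴴ * V)⁻¹ = S * Q := by
    rw [hUV, ← Matrix.conjTranspose_nonsing_inv, hU1inv, Matrix.conjTranspose_mul, hSH,
      Matrix.conjTranspose_conjTranspose]
  -- Part 1
  have part1 : specNorm ((Uᴴ * V)⁻¹) = specNorm S := by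
    rw [hsn, hsn, hUVinv]
    exact CondAux.norm_mul_unitary S Q hQ1
  -- Part 2
  have part2 : specNorm S =
      Real.sqrt (specNorm (1 : Matrix (Fin n) (Fin n) ℂ) ^ 2 + specNorm Z ^ 2) := by
    rcases Nat.eq_zero_or_pos n with hn | hn
    · subst hn
      have hS0 : S = 0 := Subsingleton.elim _ _
      have hZ0 : Z = 0 := Subsingleton.elim _ _
      have h10 : (1 : Matrix (Fin 0) (Fin 0) ℂ) = 0 := Subsingleton.elim _ _
      rw [hsn, hsn, hsn, hS0, hZ0, h10]
      simp
    · have h1 : ‖(1 : Matrix (Fin n) (Fin n) ℂ)‖ = 1 := by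
        refine le_antisymm CondAux.norm_one_le ?_
        have := CondAux.le_norm_diagonal (fun _ : Fin n => (1 : ℂ)) ⟨0, hn⟩
        rwa [norm_one, Matrix.diagonal_one] at this
      have hZZ : ‖Z * Zᴴ‖ = ‖Z‖ ^ 2 := by
        calc ‖Z * Zᴴ‖ = ‖(Zᴴ)ᴴ * Zᴴ‖ := by rw [Matrix.conjTranspose_conjTranspose]
          _ = ‖Zᴴ‖ * ‖Zᴴ‖ := Matrix.l2_opNorm_conjTranspose_mul_self _
          _ = ‖Z‖ ^ 2 := by rw [Matrix.l2_opNorm_conjTranspose, sq]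
      have hSsqnorm : ‖S‖ ^ 2 = 1 + ‖Z‖ ^ 2 := by
        calc ‖S‖ ^ 2 = ‖Sᴴ * S‖ := by rw [Matrix.l2_opNorm_conjTranspose_mul_self, sq]
          _ = ‖S * S‖ := by rw [hSH]
          _ = ‖1 + Z * Zᴴ‖ := by rw [hSsq]
          _ = 1 + ‖Z * Zᴴ‖ :=
              CondAux.norm_one_add_posSemidef hn _ (Matrix.posSemidef_self_mul_conjTranspose Z)
          _ = 1 + ‖Z‖ ^ 2 := by rw [hZZ]
      rw [hsn, hsn, hsn, h1, one_pow, ← hSsqnorm, Real.sqrt_sq (norm_nonneg S)]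
  refine ⟨part1, part2, ?_⟩
  -- Part 3
  have hsep_def : sepS A₁₁ A₂₂ = sInf ((fun X : Matrix (Fin n) (Fin m) ℂ =>
      specNorm (A₁₁ * X - X * A₂₂) / specNorm X) '' {X | X ≠ 0}) := rfl
  have hsep_nonneg : 0 ≤ sepS A₁₁ A₂₂ := by
    rw [hsep_def]
    apply Real.sInf_nonneg
    rintro x ⟨X, hX, rfl⟩
    show (0:ℝ) ≤ specNorm (A₁₁ * X - X * A₂₂) / specNorm X
    have h1 : (0:ℝ) ≤ specNorm (A₁₁ * X - X * A₂₂) := by rw [hsn]; exact norm_nonneg _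
    have h2 : (0:ℝ) ≤ specNorm X := by rw [hsn]; exact norm_nonneg _
    exact div_nonneg h1 h2
  have hq_nonneg : 0 ≤ specNorm A₁₂ / sepS A₁₁ A₂₂ := by
    apply div_nonneg _ hsep_nonneg
    rw [hsn]; exact norm_nonneg _
  rw [part1, part2]
  by_cases hZ0 : Z = 0
  · rw [hZ0]
    have : specNorm (0 : Matrix (Fin n) (Fin m) ℂ) = 0 := by rw [hsn]; exact norm_zero
    rw [this]
    have h1le : specNorm (1 : Matrix (Fin n) (Fin n) ℂ) ≤ 1 := by
      rw [hsn]; exact CondAux.norm_one_le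
    have h1nn : 0 ≤ specNorm (1 : Matrix (Fin n) (Fin n) ℂ) := by
      rw [hsn]; exact norm_nonneg _
    rw [zero_pow (by norm_num : (2:ℕ) ≠ 0), add_zero, Real.sqrt_sq h1nn]
    linarith
  · obtain ⟨s, hs, hsle⟩ := CondAux.sep_lower A₁₁ A₂₂ hdisj hZ0
    have hZpos : 0 < ‖Z‖ := norm_pos_iff.mpr hZ0
    have hsep_pos : 0 < sepS A₁₁ A₂₂ := by
      rw [hsep_def]
      refine lt_of_lt_of_le hs (le_csInf ⟨_, ⟨Z, hZ0, rfl⟩⟩ ?_)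
      rintro x ⟨X, hX, rfl⟩
      show s ≤ specNorm (A₁₁ * X - X * A₂₂) / specNorm X
      rw [hsn, hsn]
      exact hsle X hX
    have hsep_le : sepS A₁₁ A₂₂ ≤ ‖A₁₂‖ / ‖Z‖ := by
      rw [hsep_def]
      have hmem : ‖A₁₂‖ / ‖Z‖ ∈ ((fun X : Matrix (Fin n) (Fin m) ℂ =>
          specNorm (A₁₁ * X - X * A₂₂) / specNorm X) '' {X | X ≠ 0}) := by
        refine ⟨Z, hZ0, ?_⟩
        show specNorm (A₁₁ * Z - Z * A₂₂) / specNorm Z = ‖A₁₂‖ / ‖Z‖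
        rw [hsn, hsn, hZ, norm_neg]
      refine csInf_le ⟨0, ?_⟩ hmem
      rintro x ⟨X, hX, rfl⟩
      show (0:ℝ) ≤ specNorm (A₁₁ * X - X * A₂₂) / specNorm X
      have h2 : (0:ℝ) ≤ specNorm (A₁₁ * X - X * A₂₂) := by rw [hsn]; exact norm_nonneg _
      have h3 : (0:ℝ) ≤ specNorm X := by rw [hsn]; exact norm_nonneg _
      exact div_nonneg h2 h3
    have hZle : ‖Z‖ ≤ specNorm A₁₂ / sepS A₁₁ A₂₂ := by
      rw [hsn]
      rw [le_div_iff₀ hsep_pos]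
      have := (le_div_iff₀ hZpos).mp hsep_le
      linarith [this]
    have h1le : specNorm (1 : Matrix (Fin n) (Fin n) ℂ) ≤ 1 := by
      rw [hsn]; exact CondAux.norm_one_le
    have h1nn : 0 ≤ specNorm (1 : Matrix (Fin n) (Fin n) ℂ) := by
      rw [hsn]; exact norm_nonneg _
    have hsqrt : Real.sqrt (specNorm (1 : Matrix (Fin n) (Fin n) ℂ) ^ 2 + specNorm Z ^ 2)
        ≤ 1 + ‖Z‖ := by
      have hZn : specNorm Z = ‖Z‖ := hsn Z
      have hle : specNorm (1 : Matrix (Fin n) (Fin n) ℂ) ^ 2 + specNorm Z ^ 2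
          ≤ (1 + ‖Z‖) ^ 2 := by
        rw [hZn]; nlinarith [norm_nonneg Z]
      calc Real.sqrt (specNorm (1 : Matrix (Fin n) (Fin n) ℂ) ^ 2 + specNorm Z ^ 2)
          ≤ Real.sqrt ((1 + ‖Z‖) ^ 2) := Real.sqrt_le_sqrt hle
        _ = 1 + ‖Z‖ := Real.sqrt_sq (by positivity)
    linarith
end
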